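/- arXiv:0912.4164 — 11 statements merged into one kernel-verified Lean document; each statement's English description precedes it below -/
import Mathlib

section
/- Let (M, dist) be a proper geodesic metric space and let P and Q be two disjoint, nonempty, closed subsets of M. Then for every integer k ≥ 2 there exists at least one distance k-sector of P and Q, i.e., a (k−1)-tuple (C_1, …, C_{k−1}) of nonempty subsets of M such that C_i = bisect(C_{i−1}, C_{i+1}) for every i = 1, …, k−1, where C_0 = P and C_k = Q. -/
open Metric Set EMetric

/-- The bisector of two sets: points equidistant from `X` and `Y`. -/
def bisect {M : Type*} [MetricSpace M] (X Y : Set M) : Set M :=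
  {z | infDist z X = infDist z Y}

/-- A metric space is geodesic if any two distinct points are joined by a metric
segment, i.e. an isometric image of a real interval. -/
def IsGeodesicSpace (M : Type*) [MetricSpace M] : Prop :=
  ∀ x y : M, x ≠ y → ∃ (a b : ℝ) (γ : ℝ → M), a ≤ b ∧ γ a = x ∧ γ b = y ∧
    ∀ s ∈ Set.Icc a b, ∀ t ∈ Set.Icc a b, dist (γ s) (γ t) = |s - t|

/-- Operator on the `U`-side family. -/
def TUdef {M : Type*} [MetricSpace M] (k : ℕ) (P : Set M) (U V : ℕ → Set M) : ℕ → Set M :=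
  fun i => if i = 0 then P else if i < k then
    {z | infEdist z (U (i - 1)) ≤ infEdist z (V (i + 1))} else Set.univ

/-- Operator on the `V`-side family. -/
def TVdef {M : Type*} [MetricSpace M] (k : ℕ) (Q : Set M) (U V : ℕ → Set M) : ℕ → Set M :=
  fun i => if i = 0 then Set.univ else if i < k then
    {z | infEdist z (V (i + 1)) ≤ infEdist z (U (i - 1))} else Q

lemma TU_mono {M : Type*} [MetricSpace M] (k : ℕ) (P : Set M) {U V U' V' : ℕ → Set M}
    (hU : ∀ i, U i ⊆ U' i) (hV : ∀ i, V' i ⊆ V i) :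
    ∀ i, TUdef k P U V i ⊆ TUdef k P U' V' i := by
  intro i
  simp only [TUdef]
  split_ifs with h0 h1
  · exact subset_rfl
  · intro z hz
    simp only [Set.mem_setOf_eq] at hz ⊢
    exact le_trans (infEdist_anti (hU (i - 1))) (le_trans hz (infEdist_anti (hV (i + 1))))
  · exact subset_rfl

lemma TV_mono {M : Type*} [MetricSpace M] (k : ℕ) (Q : Set M) {U V U' V' : ℕ → Set M}
    (hU : ∀ i, U i ⊆ U' i) (hV : ∀ i, V' i ⊆ V i) :
    ∀ i, TVdef k Q U' V' i ⊆ TVdef k Q U V i := by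
  intro i
  simp only [TVdef]
  split_ifs with h0 h1
  · exact subset_rfl
  · intro z hz
    simp only [Set.mem_setOf_eq] at hz ⊢
    exact le_trans (infEdist_anti (hV (i + 1))) (le_trans hz (infEdist_anti (hU (i - 1))))
  · exact subset_rfl

lemma T_good {M : Type*} [MetricSpace M] (k : ℕ) (hk : 2 ≤ k) (P Q : Set M) {U V : ℕ → Set M}
    (h1 : ∀ i, U i ⊆ U (i + 1)) (h2 : ∀ i, V (i + 1) ⊆ V i)
    (h3 : P ⊆ U 0) (h4 : Q ⊆ V k) :
    (∀ i, TUdef k P U V i ⊆ TUdef k P U V (i + 1)) ∧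
    (∀ i, TVdef k Q U V (i + 1) ⊆ TVdef k Q U V i) ∧
    P ⊆ TUdef k P U V 0 ∧ Q ⊆ TVdef k Q U V k := by
  refine ⟨?_, ?_, ?_, ?_⟩
  · intro i
    by_cases hik : i + 1 < k
    · by_cases hi0 : i = 0
      · subst hi0
        intro z hz
        simp only [TUdef, if_pos rfl, ↓reduceIte] at hz
        simp only [TUdef, if_neg (by omega : ¬ (0:ℕ) + 1 = 0), if_pos hik, Set.mem_setOf_eq]
        rw [show (0:ℕ) + 1 - 1 = 0 from rfl, show infEdist z (U 0) = 0 from infEdist_zero_of_mem (h3 hz)]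
        exact zero_le
      · intro z hz
        simp only [TUdef, if_neg hi0, if_pos (by omega : i < k), Set.mem_setOf_eq] at hz
        simp only [TUdef, if_neg (by omega : ¬ i + 1 = 0), if_pos hik, Set.mem_setOf_eq,
          Nat.add_sub_cancel]
        have hUsub : U (i - 1) ⊆ U i := by
          have := h1 (i - 1)
          rwa [show i - 1 + 1 = i from by omega] at this
        exact le_trans (infEdist_anti hUsub) (le_trans hz (infEdist_anti (h2 (i + 1))))
    · have : TUdef k P U V (i + 1) = Set.univ := by
        simp only [TUdef, if_neg (by omega : ¬ i + 1 = 0), if_neg hik]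
      rw [this]; exact Set.subset_univ _
  · intro i
    by_cases hi0 : i = 0
    · subst hi0
      have : TVdef k Q U V 0 = Set.univ := by simp [TVdef]
      rw [this]; exact Set.subset_univ _
    by_cases hik1 : i + 1 < k
    · intro z hz
      simp only [TVdef, if_neg (by omega : ¬ i + 1 = 0), if_pos hik1, Set.mem_setOf_eq,
        Nat.add_sub_cancel] at hz
      simp only [TVdef, if_neg hi0, if_pos (by omega : i < k), Set.mem_setOf_eq]
      have hUsub : U (i - 1) ⊆ U i := by
        have := h1 (i - 1)
        rwa [show i - 1 + 1 = i from by omega] at this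
      exact le_trans (infEdist_anti (h2 (i + 1))) (le_trans hz (infEdist_anti hUsub))
    by_cases hik : i < k
    · -- i + 1 = k
      intro z hz
      simp only [TVdef, if_neg (by omega : ¬ i + 1 = 0), if_neg hik1] at hz
      simp only [TVdef, if_neg hi0, if_pos hik, Set.mem_setOf_eq]
      rw [show i + 1 = k from by omega, show infEdist z (V k) = 0 from infEdist_zero_of_mem (h4 hz)]
      exact zero_le
    · simp only [TVdef, if_neg (by omega : ¬ i + 1 = 0), if_neg hik1, if_neg hi0, if_neg hik]
      exact subset_rfl
  · intro z hz
    simpa only [TUdef, if_pos rfl, ↓reduceIte] using hz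
  · intro z hz
    simpa only [TVdef, if_neg (by omega : ¬ k = 0), if_neg (lt_irrefl k)] using hz
theorem exists_sector_fixed {M : Type*} [MetricSpace M] (k : ℕ) (hk : 2 ≤ k) (P Q : Set M) :
    ∃ U V : ℕ → Set M,
      (∀ i, U i ⊆ U (i + 1)) ∧ (∀ i, V (i + 1) ⊆ V i) ∧
      U 0 = P ∧ V 0 = Set.univ ∧
      (∀ i, k ≤ i → U i = Set.univ) ∧ (∀ i, k ≤ i → V i = Q) ∧
      (∀ i, 1 ≤ i → i < k →
        U i = {z | infEdist z (U (i - 1)) ≤ infEdist z (V (i + 1))}) ∧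
      (∀ i, 1 ≤ i → i < k →
        V i = {z | infEdist z (V (i + 1)) ≤ infEdist z (U (i - 1))}) := by
  classical
  set Pre : Set ((ℕ → Set M) × (ℕ → Set M)) :=
    {p | (∀ i, p.1 i ⊆ p.1 (i + 1)) ∧ (∀ i, p.2 (i + 1) ⊆ p.2 i) ∧ P ⊆ p.1 0 ∧ Q ⊆ p.2 k ∧
         (∀ i, TUdef k P p.1 p.2 i ⊆ p.1 i) ∧ (∀ i, p.2 i ⊆ TVdef k Q p.1 p.2 i)} with hPre
  have htop : ((fun _ => Set.univ, fun _ => Q) : (ℕ → Set M) × (ℕ → Set M)) ∈ Pre := by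
    refine ⟨fun i => subset_rfl, fun i => subset_rfl, Set.subset_univ _, subset_rfl,
      fun i => Set.subset_univ _, ?_⟩
    intro i z hz
    simp only [TVdef]
    split_ifs with h0 h1
    · trivial
    · simp only [Set.mem_setOf_eq]
      rw [show infEdist z Q = 0 from infEdist_zero_of_mem hz]
      exact zero_le
    · exact hz
  set Us : ℕ → Set M := fun i => ⋂ p ∈ Pre, (p.1 : ℕ → Set M) i with hUs
  set Vs : ℕ → Set M := fun i => ⋃ p ∈ Pre, (p.2 : ℕ → Set M) i with hVs
  have hlb1 : ∀ p ∈ Pre, ∀ i, Us i ⊆ p.1 i := fun p hp i => Set.biInter_subset_of_mem (t := fun q => q.1 i) hp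
  have hlb2 : ∀ p ∈ Pre, ∀ i, p.2 i ⊆ Vs i := fun p hp i => Set.subset_biUnion_of_mem (u := fun q => q.2 i) hp
  have hg1 : ∀ i, Us i ⊆ Us (i + 1) :=
    fun i => Set.subset_iInter₂ fun p hp => (hlb1 p hp i).trans (hp.1 i)
  have hg2 : ∀ i, Vs (i + 1) ⊆ Vs i :=
    fun i => Set.iUnion₂_subset fun p hp => (hp.2.1 i).trans (hlb2 p hp i)
  have hg3 : P ⊆ Us 0 := Set.subset_iInter₂ fun p hp => hp.2.2.1
  have hg4 : Q ⊆ Vs k := Set.subset_biUnion_of_mem (u := fun q => q.2 k) htop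
  have hpre1 : ∀ i, TUdef k P Us Vs i ⊆ Us i := fun i =>
    Set.subset_iInter₂ fun p hp =>
      (TU_mono k P (hlb1 p hp) (fun j => hlb2 p hp j) i).trans (hp.2.2.2.2.1 i)
  have hpre2 : ∀ i, Vs i ⊆ TVdef k Q Us Vs i := fun i =>
    Set.iUnion₂_subset fun p hp =>
      (hp.2.2.2.2.2 i).trans (TV_mono k Q (hlb1 p hp) (fun j => hlb2 p hp j) i)
  have hTgood := T_good k hk P Q hg1 hg2 hg3 hg4
  have hTmem : (TUdef k P Us Vs, TVdef k Q Us Vs) ∈ Pre := by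
    refine ⟨hTgood.1, hTgood.2.1, hTgood.2.2.1, hTgood.2.2.2, ?_, ?_⟩
    · exact fun i => TU_mono k P hpre1 hpre2 i
    · exact fun i => TV_mono k Q hpre1 hpre2 i
  have hfix1 : ∀ i, Us i = TUdef k P Us Vs i :=
    fun i => Set.Subset.antisymm (hlb1 _ hTmem i) (hpre1 i)
  have hfix2 : ∀ i, Vs i = TVdef k Q Us Vs i :=
    fun i => Set.Subset.antisymm (hpre2 i) (hlb2 _ hTmem i)
  refine ⟨Us, Vs, hg1, hg2, ?_, ?_, ?_, ?_, ?_, ?_⟩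
  · rw [hfix1 0]; simp [TUdef]
  · rw [hfix2 0]; simp [TVdef]
  · intro i hi
    rw [hfix1 i]
    simp only [TUdef, if_neg (by omega : ¬ i = 0), if_neg (by omega : ¬ i < k)]
  · intro i hi
    rw [hfix2 i]
    simp only [TVdef, if_neg (by omega : ¬ i = 0), if_neg (by omega : ¬ i < k)]
  · intro i h1 h2
    rw [hfix1 i]
    simp only [TUdef, if_neg (by omega : ¬ i = 0), if_pos h2]
  · intro i h1 h2
    rw [hfix2 i]
    simp only [TVdef, if_neg (by omega : ¬ i = 0), if_pos h2]
theorem cross_general {M : Type*} [MetricSpace M] (hgeo : IsGeodesicSpace M)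
    {A W : Set M} (hAc : IsClosed A) (hWc : IsClosed W)
    (hAne : A.Nonempty) (hWne : W.Nonempty) (hcov : A ∪ W = Set.univ)
    {z u : M} (hz : z ∈ A) (hu : u ∈ W) :
    ∃ y, y ∈ A ∩ W ∧ dist z y ≤ dist z u ∧ (y ≠ u → dist z y < dist z u) := by
  rcases eq_or_ne z u with rfl | hzu
  · exact ⟨z, ⟨hz, hu⟩, le_refl _, fun h => absurd rfl h⟩
  obtain ⟨a, b, γ, hab, hga, hgb, hiso⟩ := hgeo z u hzu
  have hmem_a : a ∈ Set.Icc a b := ⟨le_refl a, hab⟩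
  have hmem_b : b ∈ Set.Icc a b := ⟨hab, le_refl b⟩
  have hcont : ContinuousOn γ (Set.Icc a b) := by
    have hlip : LipschitzOnWith 1 γ (Set.Icc a b) := by
      apply LipschitzOnWith.of_dist_le_mul
      intro s hs t ht
      rw [hiso s hs t ht, NNReal.coe_one, one_mul, Real.dist_eq]
    exact hlip.continuousOn
  have hfc : ContinuousOn (fun t => infDist (γ t) A - infDist (γ t) W) (Set.Icc a b) :=
    ((continuous_infDist_pt A).comp_continuousOn hcont).sub
      ((continuous_infDist_pt W).comp_continuousOn hcont)
  have h0mem : (0:ℝ) ∈ Set.Icc (infDist (γ a) A - infDist (γ a) W)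
      (infDist (γ b) A - infDist (γ b) W) := by
    constructor
    · rw [hga, infDist_zero_of_mem hz]
      have := infDist_nonneg (s := W) (x := z)
      linarith
    · rw [hgb, infDist_zero_of_mem hu]
      have := infDist_nonneg (s := A) (x := u)
      linarith
  obtain ⟨t, htI, hft⟩ := intermediate_value_Icc hab hfc h0mem
  have heq : infDist (γ t) A = infDist (γ t) W := by
    have : infDist (γ t) A - infDist (γ t) W = 0 := hft
    linarith
  have hyAW : γ t ∈ A ∩ W := by
    have hun : γ t ∈ A ∪ W := by rw [hcov]; trivial
    rcases hun with h | h
    · refine ⟨h, (hWc.mem_iff_infDist_zero hWne).mpr ?_⟩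
      rw [← heq, infDist_zero_of_mem h]
    · refine ⟨(hAc.mem_iff_infDist_zero hAne).mpr ?_, h⟩
      rw [heq, infDist_zero_of_mem h]
  have hdzy : dist z (γ t) = t - a := by
    rw [← hga, hiso a hmem_a t htI, abs_of_nonpos (by linarith [htI.1] : a - t ≤ 0)]
    ring
  have hdzu : dist z u = b - a := by
    rw [← hga, ← hgb, hiso a hmem_a b hmem_b, abs_of_nonpos (by linarith : a - b ≤ 0)]
    ring
  refine ⟨γ t, hyAW, ?_, ?_⟩
  · rw [hdzy, hdzu]
    linarith [htI.2]
  · intro hne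
    have htb : t ≠ b := by
      intro h
      exact hne (by rw [h, hgb])
    have hlt : t < b := lt_of_le_of_ne htI.2 htb
    rw [hdzy, hdzu]
    linarith

theorem key_lemma {M : Type*} [MetricSpace M] [ProperSpace M] (hgeo : IsGeodesicSpace M)
    {A W Bv Ea Eb : Set M} {z : M}
    (hAc : IsClosed A) (hWc : IsClosed W) (hEbc : IsClosed Eb)
    (hAne : A.Nonempty) (hWne : W.Nonempty) (hEbne : Eb.Nonempty) (hBvne : Bv.Nonempty)
    (hcov : A ∪ W = Set.univ) (hEa : Ea = A ∩ W) (hEbW : Eb ⊆ W) (hEbBv : Eb ⊆ Bv)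
    (hdisj : ∀ y, y ∈ Ea → y ∈ Eb → False)
    (hlt : infDist z A < infDist z Bv) :
    infDist z Ea < infDist z Eb := by
  by_cases hzW : z ∈ W
  · obtain ⟨u, huA, hud⟩ := hAc.exists_infDist_eq_dist hAne z
    obtain ⟨y, hy, hle, _⟩ := cross_general hgeo hWc hAc hWne hAne
      (by rw [Set.union_comm]; exact hcov) hzW huA
    have h1 : infDist z Ea ≤ infDist z A := by
      calc infDist z Ea ≤ dist z y := infDist_le_dist_of_mem (by rw [hEa]; exact ⟨hy.2, hy.1⟩)
      _ ≤ dist z u := hle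
      _ = infDist z A := hud.symm
    calc infDist z Ea ≤ infDist z A := h1
    _ < infDist z Bv := hlt
    _ ≤ infDist z Eb := infDist_le_infDist_of_subset hEbBv hEbne
  · have hzA : z ∈ A := by
      have hun : z ∈ A ∪ W := by rw [hcov]; trivial
      rcases hun with h | h
      · exact h
      · exact absurd h hzW
    obtain ⟨e, heEb, hed⟩ := hEbc.exists_infDist_eq_dist hEbne z
    obtain ⟨y, hy, hle, hstrict⟩ := cross_general hgeo hAc hWc hAne hWne hcov hzA (hEbW heEb)
    have hyne : y ≠ e := by
      intro h
      exact hdisj y (by rw [hEa]; exact hy) (h ▸ heEb)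
    calc infDist z Ea ≤ dist z y := infDist_le_dist_of_mem (by rw [hEa]; exact hy)
    _ < dist z e := hstrict hyne
    _ = infDist z Eb := hed.symm

theorem reach_E {M : Type*} [MetricSpace M] [ProperSpace M] (hgeo : IsGeodesicSpace M)
    {A W : Set M} (hAc : IsClosed A) (hWc : IsClosed W)
    (hAne : A.Nonempty) (hWne : W.Nonempty) (hcov : A ∪ W = Set.univ)
    {z : M} (hz : z ∈ W) : infDist z (A ∩ W) = infDist z A := by
  obtain ⟨u, huA, hud⟩ := hAc.exists_infDist_eq_dist hAne z
  obtain ⟨y, hy, hle, _⟩ := cross_general hgeo hWc hAc hWne hAne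
    (by rw [Set.union_comm]; exact hcov) hz huA
  apply le_antisymm
  · calc infDist z (A ∩ W) ≤ dist z y := infDist_le_dist_of_mem ⟨hy.2, hy.1⟩
    _ ≤ dist z u := hle
    _ = infDist z A := hud.symm
  · exact infDist_le_infDist_of_subset Set.inter_subset_left ⟨y, hy.2, hy.1⟩
/-- Main theorem: existence of distance `k`-sectors in proper geodesic metric spaces. -/
theorem ksector_exists {M : Type*} [MetricSpace M] [ProperSpace M]
    (hgeo : IsGeodesicSpace M) (k : ℕ) (hk : 2 ≤ k)
    (P Q : Set M) (hPne : P.Nonempty) (hQne : Q.Nonempty)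
    (hPcl : IsClosed P) (hQcl : IsClosed Q) (hPQ : Disjoint P Q) :
    ∃ C : ℕ → Set M, C 0 = P ∧ C k = Q ∧
      ∀ i, 0 < i → i < k →
        (C i).Nonempty ∧ C i = bisect (C (i - 1)) (C (i + 1)) := by
  obtain ⟨U, V, hUm, hVm, hU0, hV0, hUk, hVk, hUeq, hVeq⟩ := exists_sector_fixed k hk P Q
  -- chains
  have hUchain : ∀ i j, i ≤ j → U i ⊆ U j := by
    intro i j hij
    induction hij with
    | refl => exact subset_rfl
    | step _ ih => exact ih.trans (hUm _)
  have hVchain : ∀ i j, i ≤ j → V j ⊆ V i := by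
    intro i j hij
    induction hij with
    | refl => exact subset_rfl
    | step _ ih => exact (hVm _).trans ih
  have hPU : ∀ i, P ⊆ U i := by
    intro i; rw [← hU0]; exact hUchain 0 i (Nat.zero_le i)
  have hQV : ∀ i, Q ⊆ V i := by
    intro i
    by_cases h : i ≤ k
    · rw [← hVk k le_rfl]; exact hVchain i k h
    · rw [hVk i (by omega)]
  have hUne : ∀ i, (U i).Nonempty := fun i => hPne.mono (hPU i)
  have hVne : ∀ i, (V i).Nonempty := fun i => hQne.mono (hQV i)
  have hUcl : ∀ i, IsClosed (U i) := by
    intro i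
    rcases Nat.eq_zero_or_pos i with rfl | hpos
    · rw [hU0]; exact hPcl
    by_cases hik : i < k
    · rw [hUeq i hpos hik]
      exact isClosed_le continuous_infEdist continuous_infEdist
    · rw [hUk i (by omega)]; exact isClosed_univ
  have hVcl : ∀ i, IsClosed (V i) := by
    intro i
    rcases Nat.eq_zero_or_pos i with rfl | hpos
    · rw [hV0]; exact isClosed_univ
    by_cases hik : i < k
    · rw [hVeq i hpos hik]
      exact isClosed_le continuous_infEdist continuous_infEdist
    · rw [hVk i (by omega)]; exact hQcl
  -- membership characterizations with real distances
  have hmemU : ∀ i, 1 ≤ i → i < k → ∀ z : M,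
      (z ∈ U i ↔ infDist z (U (i - 1)) ≤ infDist z (V (i + 1))) := by
    intro i h1 h2 z
    rw [hUeq i h1 h2]
    simp only [Set.mem_setOf_eq]
    rw [show infDist z (U (i - 1)) = (infEdist z (U (i - 1))).toReal from rfl,
        show infDist z (V (i + 1)) = (infEdist z (V (i + 1))).toReal from rfl]
    exact (ENNReal.toReal_le_toReal (infEdist_ne_top (hUne _)) (infEdist_ne_top (hVne _))).symm
  have hmemV : ∀ i, 1 ≤ i → i < k → ∀ z : M,
      (z ∈ V i ↔ infDist z (V (i + 1)) ≤ infDist z (U (i - 1))) := by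
    intro i h1 h2 z
    rw [hVeq i h1 h2]
    simp only [Set.mem_setOf_eq]
    rw [show infDist z (U (i - 1)) = (infEdist z (U (i - 1))).toReal from rfl,
        show infDist z (V (i + 1)) = (infEdist z (V (i + 1))).toReal from rfl]
    exact (ENNReal.toReal_le_toReal (infEdist_ne_top (hVne _)) (infEdist_ne_top (hUne _))).symm
  -- covering
  have hcovUV : ∀ i, i ≤ k → U i ∪ V i = Set.univ := by
    intro i hik
    apply Set.eq_univ_of_forall
    intro z
    rcases Nat.eq_zero_or_pos i with rfl | hpos
    · right; rw [hV0]; trivial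
    rcases eq_or_lt_of_le hik with rfl | hlt
    · left; rw [hUk i le_rfl]; trivial
    rcases le_total (infDist z (U (i - 1))) (infDist z (V (i + 1))) with h | h
    · left; exact (hmemU i hpos hlt z).mpr h
    · right; exact (hmemV i hpos hlt z).mpr h
  -- separation
  have hdescend : ∀ j, j < k → ∀ y, y ∈ U j → y ∈ V (j + 1) → y ∈ P := by
    intro j
    induction j with
    | zero =>
      intro _ y hy _
      rwa [hU0] at hy
    | succ n ih =>
      intro hjk y hyU hyV
      rw [hUeq (n + 1) (by omega) hjk] at hyU
      simp only [Set.mem_setOf_eq, Nat.add_sub_cancel] at hyU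
      have h0 : infEdist y (U n) = 0 := by
        have h1 : infEdist y (V (n + 1 + 1)) = 0 := infEdist_zero_of_mem hyV
        exact le_antisymm (h1 ▸ hyU) (zero_le)
      have hyUn : y ∈ U n := by
        rw [← (hUcl n).closure_eq]
        exact mem_closure_iff_infEdist_zero.mpr h0
      exact ih (by omega) y hyUn (hVchain (n + 1) (n + 2) (by omega) hyV)
  have hclimb : ∀ m n, 1 ≤ n → n + m = k → ∀ y, y ∈ P → y ∈ V n → False := by
    intro m
    induction m with
    | zero =>
      intro n h1 h2 y hyP hyV
      rw [hVk n (by omega)] at hyV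
      exact Set.disjoint_left.mp hPQ hyP hyV
    | succ m ih =>
      intro n h1 h2 y hyP hyV
      rw [hVeq n h1 (by omega)] at hyV
      simp only [Set.mem_setOf_eq] at hyV
      have h0 : infEdist y (V (n + 1)) = 0 := by
        have hU0' : infEdist y (U (n - 1)) = 0 := infEdist_zero_of_mem (hPU (n - 1) hyP)
        exact le_antisymm (hU0' ▸ hyV) (zero_le)
      have hyV' : y ∈ V (n + 1) := by
        rw [← (hVcl (n + 1)).closure_eq]
        exact mem_closure_iff_infEdist_zero.mpr h0
      exact ih (n + 1) (by omega) (by omega) y hyP hyV'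
  have hSep : ∀ j, j < k → ∀ y, y ∈ U j → y ∈ V (j + 1) → False := by
    intro j hj y hyU hyV
    exact hclimb (k - (j + 1)) (j + 1) (by omega) (by omega) y (hdescend j hj y hyU hyV) hyV
  -- nonemptiness of the sector sets
  have hEne : ∀ j, j ≤ k → (U j ∩ V j).Nonempty := by
    intro j hjk
    rcases Nat.eq_zero_or_pos j with rfl | hpos
    · obtain ⟨p, hp⟩ := hPne
      exact ⟨p, hPU 0 hp, by rw [hV0]; trivial⟩
    rcases eq_or_lt_of_le hjk with rfl | hlt
    · obtain ⟨q, hq⟩ := hQne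
      exact ⟨q, by rw [hUk j le_rfl]; trivial, hQV j hq⟩
    obtain ⟨p, hp⟩ := hPne
    obtain ⟨q, hq⟩ := hQne
    have hpq : p ≠ q := fun h => Set.disjoint_left.mp hPQ hp (h ▸ hq)
    obtain ⟨a, b, γ, hab, hga, hgb, hiso⟩ := hgeo p q hpq
    have hcont : ContinuousOn γ (Set.Icc a b) := by
      have hlip : LipschitzOnWith 1 γ (Set.Icc a b) := by
        apply LipschitzOnWith.of_dist_le_mul
        intro s hs t ht
        rw [hiso s hs t ht, NNReal.coe_one, one_mul, Real.dist_eq]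
      exact hlip.continuousOn
    have hfc : ContinuousOn
        (fun t => infDist (γ t) (U (j - 1)) - infDist (γ t) (V (j + 1))) (Set.Icc a b) :=
      ((continuous_infDist_pt (U (j - 1))).comp_continuousOn hcont).sub
        ((continuous_infDist_pt (V (j + 1))).comp_continuousOn hcont)
    have h0mem : (0:ℝ) ∈ Set.Icc
        (infDist (γ a) (U (j - 1)) - infDist (γ a) (V (j + 1)))
        (infDist (γ b) (U (j - 1)) - infDist (γ b) (V (j + 1))) := by
      constructor
      · rw [hga, infDist_zero_of_mem (hPU (j - 1) hp)]
        have := infDist_nonneg (s := V (j + 1)) (x := p)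
        linarith
      · rw [hgb, infDist_zero_of_mem (hQV (j + 1) hq)]
        have := infDist_nonneg (s := U (j - 1)) (x := q)
        linarith
    obtain ⟨t, htI, hft⟩ := intermediate_value_Icc hab hfc h0mem
    have heq : infDist (γ t) (U (j - 1)) = infDist (γ t) (V (j + 1)) := by
      have h' : infDist (γ t) (U (j - 1)) - infDist (γ t) (V (j + 1)) = 0 := hft
      linarith
    exact ⟨γ t, (hmemU j hpos hlt (γ t)).mpr heq.le, (hmemV j hpos hlt (γ t)).mpr heq.ge⟩
  -- the bisector property
  have hbis : ∀ i, 1 ≤ i → i < k →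
      (U i ∩ V i) = bisect (U (i - 1) ∩ V (i - 1)) (U (i + 1) ∩ V (i + 1)) := by
    intro i h1 h2
    have hi1k : i - 1 ≤ k := by omega
    have hi1k' : i + 1 ≤ k := by omega
    ext z
    simp only [bisect, Set.mem_setOf_eq]
    constructor
    · rintro ⟨hzU, hzV⟩
      have hud : infDist z (U (i - 1)) = infDist z (V (i + 1)) :=
        le_antisymm ((hmemU i h1 h2 z).mp hzU) ((hmemV i h1 h2 z).mp hzV)
      have e1 : infDist z (U (i - 1) ∩ V (i - 1)) = infDist z (U (i - 1)) :=
        reach_E hgeo (hUcl _) (hVcl _) (hUne _) (hVne _) (hcovUV (i - 1) hi1k)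
          (hVchain (i - 1) i (by omega) hzV)
      have e2 : infDist z (V (i + 1) ∩ U (i + 1)) = infDist z (V (i + 1)) :=
        reach_E hgeo (hVcl _) (hUcl _) (hVne _) (hUne _)
          (by rw [Set.union_comm]; exact hcovUV (i + 1) hi1k')
          (hUchain i (i + 1) (by omega) hzU)
      rw [e1, Set.inter_comm (U (i + 1)), e2, hud]
    · intro hb
      by_contra hzE
      have hsplit : z ∉ U i ∨ z ∉ V i := by
        by_contra h
        push_neg at h
        exact hzE ⟨h.1, h.2⟩
      rcases hsplit with hzU | hzV
      · -- z ∉ U i : strict inequality the other way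
        have hlt : infDist z (V (i + 1)) < infDist z (U (i - 1)) := by
          have := (hmemU i h1 h2 z).not.mp hzU
          exact lt_of_not_ge this
        have hkey := key_lemma (A := V (i + 1)) (W := U (i + 1)) (Bv := U (i - 1))
          (Ea := U (i + 1) ∩ V (i + 1)) (Eb := U (i - 1) ∩ V (i - 1)) hgeo
          (hVcl (i + 1)) (hUcl (i + 1)) ((hUcl (i - 1)).inter (hVcl (i - 1)))
          (hVne (i + 1)) (hUne (i + 1)) (hEne (i - 1) hi1k) (hUne (i - 1))
          (by rw [Set.union_comm]; exact hcovUV (i + 1) hi1k')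
          (Set.inter_comm _ _)
          (fun y hy => hUchain (i - 1) (i + 1) (by omega) hy.1)
          Set.inter_subset_left
          (fun y hy1 hy2 => hSep i h2 y (hUchain (i - 1) i (by omega) hy2.1) hy1.2)
          hlt
        rw [hb] at hkey
        exact lt_irrefl _ hkey
      · have hlt : infDist z (U (i - 1)) < infDist z (V (i + 1)) := by
          have := (hmemV i h1 h2 z).not.mp hzV
          exact lt_of_not_ge this
        have hkey := key_lemma (A := U (i - 1)) (W := V (i - 1)) (Bv := V (i + 1))
          (Ea := U (i - 1) ∩ V (i - 1)) (Eb := U (i + 1) ∩ V (i + 1)) hgeo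
          (hUcl (i - 1)) (hVcl (i - 1)) ((hUcl (i + 1)).inter (hVcl (i + 1)))
          (hUne (i - 1)) (hVne (i - 1)) (hEne (i + 1) hi1k') (hVne (i + 1))
          (hcovUV (i - 1) hi1k)
          rfl
          (fun y hy => hVchain (i - 1) (i + 1) (by omega) hy.2)
          Set.inter_subset_right
          (fun y hy1 hy2 => hSep i h2 y (hUchain (i - 1) i (by omega) hy1.1) hy2.2)
          hlt
        rw [hb] at hkey
        exact lt_irrefl _ hkey
  refine ⟨fun i => U i ∩ V i, ?_, ?_, ?_⟩
  · show U 0 ∩ V 0 = P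
    rw [hU0, hV0, Set.inter_univ]
  · show U k ∩ V k = Q
    rw [hUk k le_rfl, hVk k le_rfl, Set.univ_inter]
  · intro i h1 h2
    exact ⟨hEne i (le_of_lt h2), hbis i h1 h2⟩
end

section
/- Let (M, dist) be an arbitrary metric space, let k ≥ 2 be an integer, and let P and Q be nonempty subsets of M. Then there exists at least one k-gradation between P and Q, i.e., a (k−1)-tuple (R_1, S_1), …, (R_{k−1}, S_{k−1}) of pairs of subsets of M such that R_i = dom(R_{i−1}, S_{i+1}) and S_i = dom(S_{i+1}, R_{i−1}) for every i = 1, …, k−1, where R_0 = P and S_k = Q. -/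
open Metric Set

/-- The dominance region of `X` over `Y`: points at least as close to `X` as to `Y`. -/
def domReg {M : Type*} [MetricSpace M] (X Y : Set M) : Set M :=
  {z | infDist z X ≤ infDist z Y}

lemma subset_domReg {M : Type*} [MetricSpace M] (X Y : Set M) : X ⊆ domReg X Y := by
  intro z hz
  simp only [domReg, mem_setOf_eq, infDist_zero_of_mem hz]
  exact infDist_nonneg

lemma domReg_subset_domReg {M : Type*} [MetricSpace M] {X X' Y Y' : Set M}
    (hX : X ⊆ X') (hXne : X.Nonempty) (hY : Y' ⊆ Y) (hYne : Y'.Nonempty) :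
    domReg X Y ⊆ domReg X' Y' := by
  intro z hz
  exact le_trans (infDist_le_infDist_of_subset hX hXne)
    (le_trans hz (infDist_le_infDist_of_subset hY hYne))

/-- Existence of `k`-gradations in an arbitrary metric space. -/
theorem kgradation_exists {M : Type*} [MetricSpace M] (k : ℕ) (hk : 2 ≤ k)
    (P Q : Set M) (hPne : P.Nonempty) (hQne : Q.Nonempty) :
    ∃ R S : ℕ → Set M, R 0 = P ∧ S k = Q ∧
      ∀ i, 0 < i → i < k →
        R i = domReg (R (i - 1)) (S (i + 1)) ∧
        S i = domReg (S (i + 1)) (R (i - 1)) := by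
  classical
  -- the "clamped" S-sequence used inside the operator
  set T : (ℕ → (Set M)ᵒᵈ) → ℕ → Set M :=
    fun s j => if k ≤ j then Q else (OrderDual.ofDual (s j)) ∪ Q with hTdef
  have hTne : ∀ s j, (T s j).Nonempty := by
    intro s j
    by_cases h : k ≤ j
    · simpa [hTdef, h] using hQne
    · simp only [hTdef, h, if_false]
      exact hQne.inr
  -- the monotone operator
  set Fraw : ((ℕ → Set M) × (ℕ → (Set M)ᵒᵈ)) → ((ℕ → Set M) × (ℕ → (Set M)ᵒᵈ)) :=
    fun p =>
      (fun i => if i = 0 then P else P ∪ domReg (p.1 (i - 1) ∪ P) (T p.2 (i + 1)),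
       fun j => OrderDual.toDual (if k ≤ j ∨ j = 0 then Q
          else Q ∪ domReg (T p.2 (j + 1)) (p.1 (j - 1) ∪ P))) with hFdef
  have hmono : Monotone Fraw := by
    intro p q hpq
    obtain ⟨h1, h2⟩ := hpq
    have hT' : ∀ j, T q.2 j ⊆ T p.2 j := by
      intro j
      by_cases h : k ≤ j
      · simp [hTdef, h]
      · simp only [hTdef, h, if_false]
        exact union_subset_union_left Q (h2 j)
    constructor
    · intro i
      simp only [hFdef]
      by_cases h : i = 0
      · simp [h]
      · simp only [h, if_false]
        apply union_subset_union_right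
        exact domReg_subset_domReg (union_subset_union_left P (h1 (i - 1)))
          (hPne.inr) (hT' (i + 1)) (hTne q.2 (i + 1))
    · intro j
      simp only [hFdef]
      change (if k ≤ j ∨ j = 0 then Q
          else Q ∪ domReg (T q.2 (j + 1)) (q.1 (j - 1) ∪ P)) ⊆
        (if k ≤ j ∨ j = 0 then Q
          else Q ∪ domReg (T p.2 (j + 1)) (p.1 (j - 1) ∪ P))
      by_cases h : k ≤ j ∨ j = 0
      · simp [h]
      · simp only [h, if_false]
        apply union_subset_union_right
        exact domReg_subset_domReg (hT' (j + 1)) (hTne q.2 (j + 1))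
          (union_subset_union_left P (h1 (j - 1))) (hPne.inr)
  set F : ((ℕ → Set M) × (ℕ → (Set M)ᵒᵈ)) →o ((ℕ → Set M) × (ℕ → (Set M)ᵒᵈ)) :=
    ⟨Fraw, hmono⟩ with hFodef
  set p : (ℕ → Set M) × (ℕ → (Set M)ᵒᵈ) := OrderHom.lfp F with hpdef
  have hfix : Fraw p = p := OrderHom.map_lfp F
  have hRfix : ∀ i, p.1 i =
      (if i = 0 then P else P ∪ domReg (p.1 (i - 1) ∪ P) (T p.2 (i + 1))) := by
    intro i
    exact (congrFun (congrArg Prod.fst hfix) i).symm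
  have hSfix : ∀ j, OrderDual.ofDual (p.2 j) =
      (if k ≤ j ∨ j = 0 then Q
        else Q ∪ domReg (T p.2 (j + 1)) (p.1 (j - 1) ∪ P)) := by
    intro j
    exact congrArg OrderDual.ofDual (congrFun (congrArg Prod.snd hfix) j).symm
  -- the final sequences
  set R : ℕ → Set M := p.1 with hRdef
  set S : ℕ → Set M := fun j => if k ≤ j then Q else OrderDual.ofDual (p.2 j) with hSdef
  have hR0 : R 0 = P := by simpa using hRfix 0
  have hPsub : ∀ i, P ⊆ R i := by
    intro i
    by_cases h : i = 0
    · rw [h, hR0]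
    · rw [hRfix i]
      simp [h]
  have hSQ : ∀ j, 0 < j → Q ⊆ S j := by
    intro j hj
    by_cases h : k ≤ j
    · simp [hSdef, h]
    · have hc : ¬ (k ≤ j ∨ j = 0) := by omega
      simp only [hSdef, h, if_false]
      rw [hSfix j]
      simp [hc]
  have hTS : ∀ j, 0 < j → T p.2 j = S j := by
    intro j hj
    by_cases h : k ≤ j
    · simp [hTdef, hSdef, h]
    · simp only [hTdef, hSdef, h, if_false]
      apply Set.union_eq_left.mpr
      have := hSQ j hj
      simpa [hSdef, h] using this
  refine ⟨R, S, hR0, by simp [hSdef], ?_⟩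
  intro i hi0 hik
  have hine : i ≠ 0 := Nat.pos_iff_ne_zero.mp hi0
  constructor
  · -- R i = domReg (R (i-1)) (S (i+1))
    rw [hRfix i]
    simp only [hine, if_false]
    rw [Set.union_eq_left.mpr (hPsub (i - 1) : P ⊆ p.1 (i - 1)),
      hTS (i + 1) (Nat.succ_pos i)]
    exact Set.union_eq_right.mpr
      ((hPsub (i - 1)).trans (subset_domReg (R (i - 1)) (S (i + 1))))
  · -- S i = domReg (S (i+1)) (R (i-1))
    have hik' : ¬ k ≤ i := not_le.mpr hik
    have hcond : ¬ (k ≤ i ∨ i = 0) := by omega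
    have : S i = OrderDual.ofDual (p.2 i) := by simp [hSdef, hik']
    rw [this, hSfix i]
    simp only [hcond, if_false]
    rw [Set.union_eq_left.mpr (hPsub (i - 1) : P ⊆ p.1 (i - 1)),
      hTS (i + 1) (Nat.succ_pos i)]
    exact Set.union_eq_right.mpr
      ((hSQ (i + 1) (Nat.succ_pos i)).trans (subset_domReg (S (i + 1)) (R (i - 1))))
end

section
/- Let P and Q be nonempty, disjoint, closed sets in a proper geodesic metric space M, let k ≥ 2 be an integer, and let (R_i, S_i)_{i=1}^{k−1} be a k-gradation between P and Q. Define C_i = R_i ∩ S_i for each i = 1, …, k−1. Then each C_i is nonempty and (C_1, …, C_{k−1}) is a k-sector of P and Q, i.e., C_i = bisect(C_{i−1}, C_{i+1}) for every i = 1, …, k−1, where C_0 = P and C_k = Q. -/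
open Metric Set

private lemma geo_continuousOn {M : Type*} [MetricSpace M] {a b : ℝ} {γ : ℝ → M}
    (hiso : ∀ s ∈ Set.Icc a b, ∀ t ∈ Set.Icc a b, dist (γ s) (γ t) = |s - t|) :
    ContinuousOn γ (Set.Icc a b) := by
  apply LipschitzOnWith.continuousOn (K := 1)
  intro s hs t ht
  rw [edist_dist, edist_dist, hiso s hs t ht, Real.dist_eq]
  simp

/-- A nearest point of `A` seen from `z ∉ A` lies in any closed set containing `Aᶜ`. -/
private lemma nearest_mem {M : Type*} [MetricSpace M] (hgeo : IsGeodesicSpace M)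
    {A T : Set M} (hTcl : IsClosed T) (hcompl : Aᶜ ⊆ T) (z q : M)
    (hmin : ∀ y, dist z y < dist z q → y ∉ A) (hzq : z ≠ q) : q ∈ T := by
  obtain ⟨a, b, γ, hab, ha, hb, hiso⟩ := hgeo z q hzq
  have hdzq : dist z q = b - a := by
    rw [← ha, ← hb, hiso a ⟨le_refl a, hab⟩ b ⟨hab, le_refl b⟩, abs_of_nonpos (by linarith)]
    ring
  have haltb : a < b := by
    have : dist z q > 0 := dist_pos.mpr hzq
    linarith [hdzq ▸ this]
  rw [← hTcl.closure_eq, ← hb]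
  rw [Metric.mem_closure_iff]
  intro ε hε
  set t : ℝ := max a (b - ε / 2) with ht
  have htmem : t ∈ Set.Icc a b := ⟨le_max_left _ _, by
    apply max_le hab; linarith⟩
  have htlt : t < b := by
    apply max_lt haltb; linarith
  refine ⟨γ t, ?_, ?_⟩
  · apply hcompl
    apply hmin
    have hd1 : dist z (γ t) = t - a := by
      rw [← ha, hiso a ⟨le_refl a, hab⟩ t htmem, abs_of_nonpos (by linarith [htmem.1])]
      ring
    rw [hd1, hdzq]
    linarith
  · rw [hiso b ⟨hab, le_refl b⟩ t htmem, abs_of_nonneg (by linarith)]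
    have : b - ε / 2 ≤ t := le_max_right _ _
    linarith

/-- For closed `A`, closed `T` with `Aᶜ ⊆ T` and `z ∈ T`, the distance to `A ∩ T` equals
the distance to `A`. -/
private lemma infDist_inter_eq {M : Type*} [MetricSpace M] [ProperSpace M]
    (hgeo : IsGeodesicSpace M) {A T : Set M} (hAcl : IsClosed A) (hAne : A.Nonempty)
    (hTcl : IsClosed T) (hcompl : Aᶜ ⊆ T) (z : M) (hzT : z ∈ T) :
    infDist z (A ∩ T) = infDist z A := by
  obtain ⟨p, hpA, hp⟩ := hAcl.exists_infDist_eq_dist hAne z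
  have hpT : p ∈ T := by
    by_cases hzA : z ∈ A
    · have h0 : dist z p = 0 := by rw [← hp, infDist_zero_of_mem hzA]
      rw [dist_eq_zero] at h0
      rwa [← h0]
    · have hzp : z ≠ p := by
        intro h
        exact hzA (h ▸ hpA)
      refine nearest_mem hgeo hTcl hcompl z p (fun y hy hyA => ?_) hzp
      have := infDist_le_dist_of_mem (x := z) hyA
      rw [hp] at this
      linarith
  have hmem : p ∈ A ∩ T := ⟨hpA, hpT⟩
  refine le_antisymm ?_ (infDist_le_infDist_of_subset inter_subset_left ⟨p, hmem⟩)
  calc infDist z (A ∩ T) ≤ dist z p := infDist_le_dist_of_mem hmem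
    _ = infDist z A := hp.symm

/-- On a geodesic between a point of `A` and a point of `B` there is a point equidistant
from `A` and `B`. -/
private lemma exists_bisect_pt {M : Type*} [MetricSpace M] (hgeo : IsGeodesicSpace M)
    {A B : Set M} {x y : M} (hx : x ∈ A) (hy : y ∈ B) :
    ∃ z, infDist z A = infDist z B := by
  by_cases hxy : x = y
  · exact ⟨x, by rw [infDist_zero_of_mem hx, hxy, infDist_zero_of_mem hy]⟩
  · obtain ⟨a, b, γ, hab, ha, hb, hiso⟩ := hgeo x y hxy
    set f : ℝ → ℝ := fun t => infDist (γ t) A - infDist (γ t) B with hf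
    have hcont : ContinuousOn f (Set.Icc a b) :=
      ((continuous_infDist_pt A).comp_continuousOn (geo_continuousOn hiso)).sub
        ((continuous_infDist_pt B).comp_continuousOn (geo_continuousOn hiso))
    have h0 : (0:ℝ) ∈ Set.Icc (f a) (f b) := by
      constructor
      · simp only [hf, ha]
        rw [infDist_zero_of_mem hx]
        simp [infDist_nonneg]
      · simp only [hf, hb]
        rw [infDist_zero_of_mem hy]
        simp [infDist_nonneg]
    obtain ⟨t, _, hft⟩ := intermediate_value_Icc hab hcont h0
    refine ⟨γ t, ?_⟩
    have : infDist (γ t) A - infDist (γ t) B = 0 := hft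
    linarith

private lemma isClosed_domReg {M : Type*} [MetricSpace M] (X Y : Set M) :
    IsClosed (domReg X Y) :=
  isClosed_le (continuous_infDist_pt X) (continuous_infDist_pt Y)

/-- A `k`-gradation between `P` and `Q` yields a `k`-sector via `C i = R i ∩ S i`. -/
theorem kgradation_gives_ksector {M : Type*} [MetricSpace M] [ProperSpace M]
    (hgeo : IsGeodesicSpace M) (k : ℕ) (hk : 2 ≤ k)
    (P Q : Set M) (hPne : P.Nonempty) (hQne : Q.Nonempty)
    (hPcl : IsClosed P) (hQcl : IsClosed Q) (hPQ : Disjoint P Q)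
    (R S : ℕ → Set M) (hR0 : R 0 = P) (hSk : S k = Q)
    (hgrad : ∀ i, 0 < i → i < k →
      R i = domReg (R (i - 1)) (S (i + 1)) ∧
      S i = domReg (S (i + 1)) (R (i - 1))) :
    ∃ C : ℕ → Set M, C 0 = P ∧ C k = Q ∧
      (∀ i, 0 < i → i < k → C i = R i ∩ S i) ∧
      ∀ i, 0 < i → i < k →
        (C i).Nonempty ∧ C i = bisect (C (i - 1)) (C (i + 1)) := by
  classical
  -- Closedness of the pieces of the gradation
  have hRcl : ∀ i, i < k → IsClosed (R i) := by
    intro i hi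
    rcases Nat.eq_zero_or_pos i with h0 | h0
    · rw [h0, hR0]; exact hPcl
    · rw [(hgrad i h0 hi).1]; exact isClosed_domReg _ _
  have hScl : ∀ i, 0 < i → i ≤ k → IsClosed (S i) := by
    intro i hi hik
    rcases eq_or_lt_of_le hik with h0 | h0
    · rw [h0, hSk]; exact hQcl
    · rw [(hgrad i hi h0).2]; exact isClosed_domReg _ _
  -- membership characterizations
  have hmemR : ∀ i, 0 < i → i < k → ∀ z : M,
      z ∈ R i ↔ infDist z (R (i - 1)) ≤ infDist z (S (i + 1)) := by
    intro i hi hik z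
    rw [(hgrad i hi hik).1]
    exact Iff.rfl
  have hmemS : ∀ i, 0 < i → i < k → ∀ z : M,
      z ∈ S i ↔ infDist z (S (i + 1)) ≤ infDist z (R (i - 1)) := by
    intro i hi hik z
    rw [(hgrad i hi hik).2]
    exact Iff.rfl
  -- monotone chains
  have hRchain : ∀ i, 0 < i → i < k → R (i - 1) ⊆ R i := by
    intro i hi hik z hz
    apply (hmemR i hi hik z).mpr
    rw [infDist_zero_of_mem hz]
    exact infDist_nonneg
  have hSchain : ∀ i, 0 < i → i < k → S (i + 1) ⊆ S i := by
    intro i hi hik z hz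
    apply (hmemS i hi hik z).mpr
    rw [infDist_zero_of_mem hz]
    exact infDist_nonneg
  -- P and Q are contained in the chains
  have hPsub : ∀ i, i < k → P ⊆ R i := by
    intro i
    induction i with
    | zero => intro _; rw [hR0]
    | succ n ih =>
      intro hn
      refine subset_trans (ih (by omega)) ?_
      have := hRchain (n + 1) (by omega) hn
      simpa using this
  have hQsubAux : ∀ d i, i + d = k → 0 < i → Q ⊆ S i := by
    intro d
    induction d with
    | zero => intro i h _; rw [show i = k by omega, hSk]
    | succ n ih =>
      intro i h hi
      exact subset_trans (ih (i + 1) (by omega) (by omega)) (hSchain i hi (by omega))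
  have hQsub : ∀ i, 0 < i → i ≤ k → Q ⊆ S i := fun i hi hik =>
    hQsubAux (k - i) i (by omega) hi
  have hRne : ∀ i, i < k → (R i).Nonempty := fun i hi => hPne.mono (hPsub i hi)
  have hSne : ∀ i, 0 < i → i ≤ k → (S i).Nonempty := fun i hi hik =>
    hQne.mono (hQsub i hi hik)
  -- complements
  have hcomplR : ∀ j, 0 < j → j < k → (R j)ᶜ ⊆ S j := by
    intro j hj hjk z hz
    apply (hmemS j hj hjk z).mpr
    have := (hmemR j hj hjk z).not.mp hz
    exact le_of_not_ge this
  have hcomplS : ∀ j, 0 < j → j < k → (S j)ᶜ ⊆ R j := by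
    intro j hj hjk z hz
    apply (hmemR j hj hjk z).mpr
    have := (hmemS j hj hjk z).not.mp hz
    exact le_of_not_ge this
  -- cascade: a point in R (j-1) ∩ S (j+1) would lie in P ∩ Q
  have hcascadeP : ∀ m, m < k → ∀ w, w ∈ R m → w ∈ S (m + 1) → w ∈ P := by
    intro m
    induction m with
    | zero => intro _ w hw _; rwa [hR0] at hw
    | succ n ih =>
      intro hn w hw hw2
      have h1 := (hmemR (n + 1) (by omega) hn w).mp hw
      simp only [Nat.add_sub_cancel] at h1
      rw [infDist_zero_of_mem hw2] at h1
      have hw1 : w ∈ R n :=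
        ((hRcl n (by omega)).mem_iff_infDist_zero (hRne n (by omega))).mpr
          (le_antisymm h1 infDist_nonneg)
      exact ih (by omega) w hw1 (hSchain (n + 1) (by omega) hn hw2)
  have hcascadeQ : ∀ d m, m + d = k → 0 < m → ∀ w, w ∈ S m → w ∈ R (m - 1) → w ∈ Q := by
    intro d
    induction d with
    | zero => intro m h _ w hw _; rwa [show m = k by omega, hSk] at hw
    | succ n ih =>
      intro m h hm w hw hw2
      have hmk : m < k := by omega
      have h1 := (hmemS m hm hmk w).mp hw
      rw [infDist_zero_of_mem hw2] at h1
      have hw1 : w ∈ S (m + 1) :=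
        ((hScl (m + 1) (by omega) (by omega)).mem_iff_infDist_zero
          (hSne (m + 1) (by omega) (by omega))).mpr (le_antisymm h1 infDist_nonneg)
      have hw2' : w ∈ R m := hRchain m hm hmk hw2
      exact ih (m + 1) (by omega) (by omega) w hw1 (by simpa using hw2')
  have hEmpty : ∀ j, 0 < j → j < k → ∀ w, w ∈ R (j - 1) → w ∈ S (j + 1) → False := by
    intro j hj hjk w h1 h2
    have hwP : w ∈ P := by
      refine hcascadeP (j - 1) (by omega) w h1 ?_
      have := hSchain j hj hjk h2
      rwa [show j - 1 + 1 = j by omega]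
    have hwQ : w ∈ Q := by
      refine hcascadeQ (k - (j + 1)) (j + 1) (by omega) (by omega) w h2 ?_
      have := hRchain j hj hjk h1
      rwa [show j + 1 - 1 = j by omega]
    exact (disjoint_left.mp hPQ hwP) hwQ
  -- the sector candidate
  set C : ℕ → Set M := fun i => if i = 0 then P else if i = k then Q else R i ∩ S i
    with hCdef
  have hC0 : C 0 = P := by rw [hCdef]; simp
  have hCk : C k = Q := by rw [hCdef]; simp [show k ≠ 0 by omega]
  have hCmid : ∀ i, 0 < i → i < k → C i = R i ∩ S i := by
    intro i hi hik
    rw [hCdef]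
    simp [show i ≠ 0 by omega, show i ≠ k by omega]
  have hCsubR : ∀ i, i < k → C i ⊆ R i := by
    intro i hi
    rcases Nat.eq_zero_or_pos i with h0 | h0
    · subst h0; rw [hC0, ← hR0]
    · rw [hCmid i h0 hi]; exact inter_subset_left
  have hCsubS : ∀ i, 0 < i → i ≤ k → C i ⊆ S i := by
    intro i hi hik
    rcases eq_or_lt_of_le hik with h0 | h0
    · subst h0; rw [hCk, ← hSk]
    · rw [hCmid i hi h0]; exact inter_subset_right
  have hCcl : ∀ i, i ≤ k → IsClosed (C i) := by
    intro i hik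
    rcases Nat.eq_zero_or_pos i with h0 | h0
    · subst h0; rw [hC0]; exact hPcl
    rcases eq_or_lt_of_le hik with h1 | h1
    · subst h1; rw [hCk]; exact hQcl
    · rw [hCmid i h0 h1]; exact (hRcl i h1).inter (hScl i h0 (le_of_lt h1))
  have hCne : ∀ i, i ≤ k → (C i).Nonempty := by
    intro i hik
    rcases Nat.eq_zero_or_pos i with h0 | h0
    · subst h0; rw [hC0]; exact hPne
    rcases eq_or_lt_of_le hik with h1 | h1
    · subst h1; rw [hCk]; exact hQne
    · rw [hCmid i h0 h1]
      obtain ⟨x, hx⟩ := hPne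
      obtain ⟨y, hy⟩ := hQne
      obtain ⟨z, hz⟩ := exists_bisect_pt hgeo (hPsub (i - 1) (by omega) hx)
        (hQsub (i + 1) (by omega) (by omega) hy)
      exact ⟨z, (hmemR i h0 h1 z).mpr (le_of_eq hz), (hmemS i h0 h1 z).mpr (le_of_eq hz.symm)⟩
  -- key same-level lemma
  have hKeyR : ∀ j, 0 < j → j < k → ∀ z ∈ R j, infDist z (R j ∩ S j) = infDist z (S j) := by
    intro j hj hjk z hz
    rw [inter_comm]
    exact infDist_inter_eq hgeo (hScl j hj hjk.le) (hSne j hj hjk.le) (hRcl j hjk)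
      (hcomplS j hj hjk) z hz
  have hKeyS : ∀ j, 0 < j → j < k → ∀ z ∈ S j, infDist z (R j ∩ S j) = infDist z (R j) := by
    intro j hj hjk z hz
    exact infDist_inter_eq hgeo (hRcl j hjk) (hRne j hjk) (hScl j hj hjk.le)
      (hcomplR j hj hjk) z hz
  -- Lemma A and Lemma B
  have hLA : ∀ i, 0 < i → i < k → ∀ z ∈ S i,
      infDist z (C (i - 1)) = infDist z (R (i - 1)) := by
    intro i hi hik z hz
    by_cases h1 : i = 1
    · subst h1
      show infDist z (C 0) = infDist z (R 0)
      rw [hC0, hR0]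
    · have h2 : 2 ≤ i := by omega
      have e1 : i - 1 + 1 = i := by omega
      have hz' : z ∈ S (i - 1) := hSchain (i - 1) (by omega) (by omega) (by rw [e1]; exact hz)
      rw [hCmid (i - 1) (by omega) (by omega)]
      exact hKeyS (i - 1) (by omega) (by omega) z hz'
  have hLB : ∀ i, 0 < i → i < k → ∀ z ∈ R i,
      infDist z (C (i + 1)) = infDist z (S (i + 1)) := by
    intro i hi hik z hz
    by_cases h1 : i + 1 = k
    · rw [h1, hCk, hSk]
    · have h2 : i + 1 < k := by omega
      have hz' : z ∈ R (i + 1) := hRchain (i + 1) (by omega) h2 (by simpa using hz)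
      rw [hCmid (i + 1) (by omega) h2]
      exact hKeyR (i + 1) (by omega) h2 z hz'
  -- conclusion
  refine ⟨C, hC0, hCk, hCmid, ?_⟩
  intro i hi hik
  refine ⟨hCne i (le_of_lt hik), ?_⟩
  rw [hCmid i hi hik]
  ext z
  simp only [bisect, mem_setOf_eq, mem_inter_iff]
  constructor
  · rintro ⟨hzR, hzS⟩
    have e1 := hLA i hi hik z hzS
    have e2 := hLB i hi hik z hzR
    have e3 : infDist z (R (i - 1)) = infDist z (S (i + 1)) :=
      le_antisymm ((hmemR i hi hik z).mp hzR) ((hmemS i hi hik z).mp hzS)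
    rw [e1, e3, ← e2]
  · intro h
    by_cases hzR : z ∈ R i
    · refine ⟨hzR, ?_⟩
      have e2 := hLB i hi hik z hzR
      apply (hmemS i hi hik z).mpr
      rw [← e2, ← h]
      by_cases h1 : i = 1
      · subst h1
        show infDist z (C 0) ≤ infDist z (R 0)
        rw [hC0, hR0]
      · have h2 : 2 ≤ i := by omega
        by_cases hzS' : z ∈ S (i - 1)
        · rw [hCmid (i - 1) (by omega) (by omega),
            hKeyS (i - 1) (by omega) (by omega) z hzS']
        · exfalso
          have hzR' : z ∈ R (i - 1) := hcomplS (i - 1) (by omega) (by omega) hzS'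
          have ekey : infDist z (C (i - 1)) = infDist z (S (i - 1)) := by
            rw [hCmid (i - 1) (by omega) (by omega)]
            exact hKeyR (i - 1) (by omega) (by omega) z hzR'
          have hpos : 0 < infDist z (S (i - 1)) :=
            ((hScl (i - 1) (by omega) (by omega)).notMem_iff_infDist_pos
              (hSne (i - 1) (by omega) (by omega))).mp hzS'
          obtain ⟨q, hqC, hq⟩ := (hCcl (i + 1) (by omega)).exists_infDist_eq_dist
            (hCne (i + 1) (by omega)) z
          have hqS1 : q ∈ S (i + 1) := hCsubS (i + 1) (by omega) (by omega) hqC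
          have hqSm : q ∈ S (i - 1) := by
            have hqi : q ∈ S i := hSchain i hi hik hqS1
            refine hSchain (i - 1) (by omega) (by omega) ?_
            rwa [show i - 1 + 1 = i by omega]
          have hdq : dist z q = infDist z (S (i - 1)) := by
            rw [← hq, ← h, ekey]
          have hzq : z ≠ q := by
            intro e
            have hz0 : dist z q = 0 := by rw [e, dist_self]
            rw [hz0] at hdq
            rw [← hdq] at hpos
            exact lt_irrefl _ hpos
          have hqR : q ∈ R (i - 1) := by
            refine nearest_mem hgeo (hRcl (i - 1) (by omega))
              (hcomplS (i - 1) (by omega) (by omega)) z q (fun y hy hyA => ?_) hzq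
            have := infDist_le_dist_of_mem (x := z) hyA
            rw [hdq] at hy
            linarith
          exact hEmpty i hi hik q hqR hqS1
    · have hzS : z ∈ S i := hcomplR i hi hik hzR
      refine ⟨?_, hzS⟩
      have e1 := hLA i hi hik z hzS
      apply (hmemR i hi hik z).mpr
      rw [← e1, h]
      by_cases h1 : i + 1 = k
      · rw [h1, hCk, hSk]
      · have h2 : i + 1 < k := by omega
        by_cases hzR' : z ∈ R (i + 1)
        · rw [hCmid (i + 1) (by omega) h2, hKeyR (i + 1) (by omega) h2 z hzR']
        · exfalso
          have hzS' : z ∈ S (i + 1) := hcomplR (i + 1) (by omega) h2 hzR'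
          have ekey : infDist z (C (i + 1)) = infDist z (R (i + 1)) := by
            rw [hCmid (i + 1) (by omega) h2]
            exact hKeyS (i + 1) (by omega) h2 z hzS'
          have hpos : 0 < infDist z (R (i + 1)) :=
            ((hRcl (i + 1) h2).notMem_iff_infDist_pos (hRne (i + 1) h2)).mp hzR'
          obtain ⟨q, hqC, hq⟩ := (hCcl (i - 1) (by omega)).exists_infDist_eq_dist
            (hCne (i - 1) (by omega)) z
          have hqR1 : q ∈ R (i - 1) := hCsubR (i - 1) (by omega) hqC
          have hqRp : q ∈ R (i + 1) := by
            have hqi : q ∈ R i := hRchain i hi hik hqR1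
            refine hRchain (i + 1) (by omega) h2 ?_
            rwa [show i + 1 - 1 = i by omega]
          have hdq : dist z q = infDist z (R (i + 1)) := by
            rw [← hq, h, ekey]
          have hzq : z ≠ q := by
            intro e
            have hz0 : dist z q = 0 := by rw [e, dist_self]
            rw [hz0] at hdq
            rw [← hdq] at hpos
            exact lt_irrefl _ hpos
          have hqS : q ∈ S (i + 1) := by
            refine nearest_mem hgeo (hScl (i + 1) (by omega) (by omega))
              (hcomplR (i + 1) (by omega) h2) z q (fun y hy hyA => ?_) hzq
            have := infDist_le_dist_of_mem (x := z) hyA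
            rw [hdq] at hy
            linarith
          exact hEmpty i hi hik q hqR1 hqS
end

section
/- Let M be a geodesic metric space and let X and Y be nonempty subsets of M. Then the bisector bisect(X, Y) is nonempty. -/
open Metric Set

/-- In a geodesic metric space, the bisector of two nonempty sets is nonempty. -/
theorem bisect_nonempty {M : Type*} [MetricSpace M] (hgeo : IsGeodesicSpace M)
    (X Y : Set M) (hX : X.Nonempty) (hY : Y.Nonempty) :
    (bisect X Y).Nonempty := by
  obtain ⟨x, hx⟩ := hX
  obtain ⟨y, hy⟩ := hY
  set f : M → ℝ := fun z => infDist z X - infDist z Y with hf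
  have hfx : f x ≤ 0 := by
    simp only [hf, sub_nonpos, infDist_zero_of_mem hx]
    exact infDist_nonneg
  have hfy : 0 ≤ f y := by
    simp only [hf, sub_nonneg, infDist_zero_of_mem hy]
    exact infDist_nonneg
  by_cases hxy : x = y
  · refine ⟨x, ?_⟩
    have : f x = 0 := le_antisymm hfx (hxy ▸ hfy)
    simpa [bisect, hf, sub_eq_zero] using this
  obtain ⟨a, b, γ, hab, hga, hgb, hiso⟩ := hgeo x y hxy
  have hγcont : ContinuousOn γ (Icc a b) := by
    have : LipschitzOnWith 1 γ (Icc a b) := by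
      intro s hs t ht
      rw [edist_dist, hiso s hs t ht, edist_dist, Real.dist_eq, ENNReal.coe_one, one_mul]
    exact this.continuousOn
  have hfcont : Continuous f :=
    (continuous_infDist_pt X).sub (continuous_infDist_pt Y)
  have hcont : ContinuousOn (f ∘ γ) (Icc a b) :=
    hfcont.comp_continuousOn hγcont
  have h0 : (0 : ℝ) ∈ Icc ((f ∘ γ) a) ((f ∘ γ) b) := by
    constructor
    · simpa [hga] using hfx
    · simpa [hgb] using hfy
  obtain ⟨t, _, ht⟩ := intermediate_value_Icc hab hcont h0
  exact ⟨γ t, by simpa [bisect, hf, sub_eq_zero] using ht⟩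
end

section
/- Let X, Y, Z be nonempty closed sets in a proper geodesic metric space M, let D = dom(X, Y) and C = bisect(X, Y). If D and Z are disjoint, then bisect(D, Z) = bisect(C, Z). -/
open Metric Set

/-- A geodesic from a point weakly dominated by `X` to a point strictly dominated
by `Y` crosses the bisector. -/
lemma exists_bisect_between {M : Type*} [MetricSpace M] (hgeo : IsGeodesicSpace M)
    (X Y : Set M) {a b : M}
    (ha : infDist a X ≤ infDist a Y) (hb : infDist b Y < infDist b X) :
    ∃ q ∈ bisect X Y, dist a q + dist q b = dist a b := by
  have hab : a ≠ b := by rintro rfl; exact absurd ha (not_le.2 hb)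
  obtain ⟨s, t, γ, hst, hs, ht, hiso⟩ := hgeo a b hab
  have hγcont : ContinuousOn γ (Icc s t) := by
    refine (LipschitzOnWith.continuousOn (K := 1) ?_)
    intro u hu v hv
    rw [edist_dist, hiso u hu v hv, edist_dist, Real.dist_eq]
    simp
  set g : ℝ → ℝ := fun u => infDist (γ u) X - infDist (γ u) Y with hg
  have hgcont : ContinuousOn g (Icc s t) :=
    (((continuous_infDist_pt X).comp_continuousOn hγcont).sub
      ((continuous_infDist_pt Y).comp_continuousOn hγcont))
  have hmem : (0 : ℝ) ∈ Icc (g s) (g t) := by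
    constructor
    · simp only [hg, hs]; linarith
    · simp only [hg, ht]; linarith
  obtain ⟨u, hu, hgu⟩ := intermediate_value_Icc hst hgcont hmem
  refine ⟨γ u, ?_, ?_⟩
  · rw [bisect, mem_setOf_eq, ← sub_eq_zero]; exact hgu
  · have h1 : dist a (γ u) = u - s := by
      rw [← hs, hiso s (left_mem_Icc.2 hst) u hu, abs_sub_comm,
        abs_of_nonneg (by linarith [hu.1])]
    have h2 : dist (γ u) b = t - u := by
      rw [← ht, hiso u hu t (right_mem_Icc.2 hst), abs_sub_comm,
        abs_of_nonneg (by linarith [hu.2])]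
    have h3 : dist a b = t - s := by
      rw [← hs, ← ht, hiso s (left_mem_Icc.2 hst) t (right_mem_Icc.2 hst),
        abs_sub_comm, abs_of_nonneg (by linarith)]
    rw [h1, h2, h3]; ring

/-- If the dominance region `D = dom(X,Y)` is disjoint from `Z`, then the bisector of
`D` and `Z` equals the bisector of `C = bisect(X,Y)` and `Z`. -/
theorem bisect_of_dom_eq_bisect_of_bisect {M : Type*} [MetricSpace M] [ProperSpace M]
    (hgeo : IsGeodesicSpace M)
    (X Y Z : Set M) (hX : X.Nonempty) (hY : Y.Nonempty) (hZ : Z.Nonempty)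
    (hXcl : IsClosed X) (hYcl : IsClosed Y) (hZcl : IsClosed Z)
    (hdisj : Disjoint (domReg X Y) Z) :
    bisect (domReg X Y) Z = bisect (bisect X Y) Z := by
  set D := domReg X Y with hD
  set C := bisect X Y with hC
  have hXD : X ⊆ D := fun x hx => by
    simp only [hD, domReg, mem_setOf_eq, infDist_zero_of_mem hx]
    exact infDist_nonneg
  have hDne : D.Nonempty := hX.mono hXD
  have hDcl : IsClosed D :=
    isClosed_le (continuous_infDist_pt X) (continuous_infDist_pt Y)
  have hCD : C ⊆ D := fun q hq => le_of_eq hq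
  ext z
  simp only [hC, hD, bisect, mem_setOf_eq]
  by_cases hz : z ∈ D
  · -- z in the dominance region: both sides fail
    have hzZ : z ∉ Z := fun h => (hdisj.le_bot ⟨hz, h⟩ : z ∈ (⊥ : Set M))
    have hZpos : 0 < infDist z Z := by
      rwa [← hZcl.notMem_iff_infDist_pos hZ]
    obtain ⟨w, hw, hwd⟩ := hZcl.exists_infDist_eq_dist hZ z
    have hwD : w ∉ D := fun h => (hdisj.le_bot ⟨h, hw⟩ : w ∈ (⊥ : Set M))
    have hwlt : infDist w Y < infDist w X := by
      simpa [hD, domReg, not_le] using hwD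
    obtain ⟨q, hq, hqd⟩ := exists_bisect_between hgeo X Y hz hwlt
    have hqw : q ≠ w := fun h => hwD (h ▸ hCD hq)
    have hlt : infDist z C < infDist z Z := by
      calc infDist z C ≤ dist z q := infDist_le_dist_of_mem hq
        _ < dist z q + dist q w := by
            have := dist_pos.2 hqw; linarith
        _ = dist z w := hqd
        _ = infDist z Z := hwd.symm
    constructor
    · intro h
      rw [infDist_zero_of_mem hz] at h
      exact absurd h.symm (ne_of_gt hZpos)
    · intro h
      exact absurd h (ne_of_lt hlt)
  · -- z outside the dominance region: infDist z D = infDist z C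
    have hzlt : infDist z Y < infDist z X := by
      simpa [hD, domReg, not_le] using hz
    obtain ⟨p, hp, hpd⟩ := hDcl.exists_infDist_eq_dist hDne z
    have hpD : infDist p X ≤ infDist p Y := hp
    obtain ⟨q, hq, hqd⟩ := exists_bisect_between hgeo X Y hpD hzlt
    have hCne : C.Nonempty := ⟨q, hq⟩
    have h1 : infDist z D ≤ infDist z C := infDist_le_infDist_of_subset hCD hCne
    have h2 : infDist z C ≤ infDist z D := by
      calc infDist z C ≤ dist z q := infDist_le_dist_of_mem hq
        _ ≤ dist z p := by
            rw [dist_comm z p, ← hqd, dist_comm q z]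
            linarith [dist_nonneg (x := p) (y := q)]
        _ = infDist z D := hpd.symm
    have heq : infDist z D = infDist z C := le_antisymm h1 h2
    rw [heq]; rfl
end

section
/- Let X, Y, Z be nonempty closed sets in a proper geodesic metric space M, let D = dom(X, Y) and C = bisect(X, Y), and suppose D and Z are disjoint. Then for every point a ∈ D one has dist(a, Z) > dist(a, C). -/
open Metric Set

/-- Inside the dominance region `D = dom(X,Y)`, every point is strictly closer to the
bisector `C = bisect(X,Y)` than to a closed set `Z` disjoint from `D`. -/
theorem dist_to_Z_gt_dist_to_bisect {M : Type*} [MetricSpace M] [ProperSpace M]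
    (hgeo : IsGeodesicSpace M)
    (X Y Z : Set M) (hX : X.Nonempty) (hY : Y.Nonempty) (hZ : Z.Nonempty)
    (hXcl : IsClosed X) (hYcl : IsClosed Y) (hZcl : IsClosed Z)
    (hdisj : Disjoint (domReg X Y) Z) :
    ∀ a ∈ domReg X Y, infDist a Z > infDist a (bisect X Y) := by
  intro a ha
  have haZ : a ∉ Z := Set.disjoint_left.mp hdisj ha
  obtain ⟨z, hzZ, hz⟩ := hZcl.exists_infDist_eq_dist hZ a
  have hzD : z ∉ domReg X Y := fun h => Set.disjoint_left.mp hdisj h hzZ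
  have haneq : a ≠ z := fun h => haZ (h ▸ hzZ)
  obtain ⟨α, β, γ, hab, hγa, hγb, hiso⟩ := hgeo a z haneq
  have hαβ : α < β := by
    rcases lt_or_eq_of_le hab with h | h
    · exact h
    · exact absurd (by rw [← hγa, ← hγb, h]) haneq
  set g : ℝ → ℝ := fun t => infDist (γ t) X - infDist (γ t) Y with hg_def
  have hlip : LipschitzOnWith 1 γ (Icc α β) := by
    intro s hs t ht
    rw [edist_dist, hiso s hs t ht, edist_dist, Real.dist_eq]
    simp
  have hg : ContinuousOn g (Icc α β) := by
    have hγc := hlip.continuousOn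
    exact ((continuous_infDist_pt X).comp_continuousOn hγc).sub
      ((continuous_infDist_pt Y).comp_continuousOn hγc)
  have hgα : g α ≤ 0 := by
    simp only [hg_def, hγa, sub_nonpos]
    exact ha
  have hgβ : 0 < g β := by
    have : infDist z Y < infDist z X := not_le.mp hzD
    simp only [hg_def, hγb, sub_pos]
    exact this
  obtain ⟨t, ht, hgt⟩ := intermediate_value_Icc hab hg ⟨hgα, le_of_lt hgβ⟩
  have hcC : γ t ∈ bisect X Y := sub_eq_zero.mp hgt
  have htβ : t < β := by
    rcases lt_or_eq_of_le ht.2 with h | h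
    · exact h
    · rw [h] at hgt; linarith
  have h1 : infDist a (bisect X Y) ≤ dist a (γ t) := infDist_le_dist_of_mem hcC
  have h2 : dist a (γ t) = t - α := by
    rw [← hγa, hiso α ⟨le_refl _, hab⟩ t ht, abs_of_nonpos (by linarith [ht.1])]
    ring
  have h3 : infDist a Z = β - α := by
    rw [hz, ← hγa, ← hγb, hiso α ⟨le_refl _, hab⟩ β ⟨hab, le_refl _⟩,
      abs_of_nonpos (by linarith)]
    ring
  rw [h3]
  linarith
end

section
/- Let X and Y be nonempty closed sets in a geodesic metric space M, let D = dom(X, Y) and C = bisect(X, Y). Then for every point a ∉ D one has dist(a, C) = dist(a, D). -/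
open Metric Set

lemma exists_bisect_le {M : Type*} [MetricSpace M] (hgeo : IsGeodesicSpace M)
    (X Y : Set M) {a d : M} (ha : infDist a Y < infDist a X)
    (hd : d ∈ domReg X Y) : ∃ c ∈ bisect X Y, dist a c ≤ dist a d := by
  have had : a ≠ d := by
    rintro rfl
    exact absurd hd (by simp [domReg, not_le, ha])
  obtain ⟨u, v, γ, huv, hga, hgb, hiso⟩ := hgeo a d had
  have hγ : ContinuousOn γ (Icc u v) :=
    (LipschitzOnWith.of_dist_le_mul (K := 1)
      (fun s hs t ht => by rw [hiso s hs t ht]; simp [Real.dist_eq])).continuousOn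
  have hf : Continuous (fun z : M => infDist z X - infDist z Y) :=
    (continuous_infDist_pt X).sub (continuous_infDist_pt Y)
  have hcont : ContinuousOn (fun t => infDist (γ t) X - infDist (γ t) Y) (Icc u v) :=
    hf.comp_continuousOn hγ
  have h0 : (0:ℝ) ∈ Icc (infDist (γ v) X - infDist (γ v) Y)
      (infDist (γ u) X - infDist (γ u) Y) := by
    constructor
    · rw [hgb]; exact sub_nonpos.mpr hd
    · rw [hga]; exact le_of_lt (sub_pos.mpr ha)
  obtain ⟨t, ht, hft⟩ := intermediate_value_Icc' huv hcont h0
  refine ⟨γ t, sub_eq_zero.mp hft, ?_⟩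
  have h1 : dist a (γ t) = t - u := by
    rw [← hga, hiso u ⟨le_refl u, huv⟩ t ht, abs_sub_comm, abs_of_nonneg (sub_nonneg.mpr ht.1)]
  have h2 : dist a d = v - u := by
    rw [← hga, ← hgb, hiso u ⟨le_refl u, huv⟩ v ⟨huv, le_refl v⟩, abs_sub_comm,
      abs_of_nonneg (sub_nonneg.mpr huv)]
  rw [h1, h2]
  linarith [ht.2]

/-- Seen from outside, the dominance region `D = dom(X,Y)` and the bisector
`C = bisect(X,Y)` are at the same distance. -/
theorem dist_to_bisect_eq_dist_to_dom {M : Type*} [MetricSpace M]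
    (hgeo : IsGeodesicSpace M)
    (X Y : Set M) (hX : X.Nonempty) (hY : Y.Nonempty)
    (hXcl : IsClosed X) (hYcl : IsClosed Y) :
    ∀ a, a ∉ domReg X Y → infDist a (bisect X Y) = infDist a (domReg X Y) := by
  intro a ha
  simp only [domReg, mem_setOf_eq, not_le] at ha
  have hDne : (domReg X Y).Nonempty := hX.imp fun x hx => by
    simp [domReg, infDist_zero_of_mem hx, infDist_nonneg]
  obtain ⟨d0, hd0⟩ := hDne
  obtain ⟨c0, hc0, _⟩ := exists_bisect_le hgeo X Y ha hd0
  apply le_antisymm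
  · refine le_of_not_gt fun hlt => ?_
    obtain ⟨d, hd, hlt'⟩ := (infDist_lt_iff ⟨d0, hd0⟩).mp hlt
    obtain ⟨c, hc, hcd⟩ := exists_bisect_le hgeo X Y ha hd
    exact absurd (le_trans (infDist_le_dist_of_mem hc) hcd) (not_le.mpr hlt')
  · exact infDist_le_infDist_of_subset (fun z hz => le_of_eq hz) ⟨c0, hc0⟩
end

section
/- Let P and Q be nonempty, disjoint, closed sets in an arbitrary metric space M, let k ≥ 2 be an integer, and let (C_1, …, C_{k−1}) be a k-sector of C_0 = P and C_k = Q. Then C_{i−1} and C_{i+1} are disjoint for each i = 1, …, k−1. -/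
open Metric Set

/-- In a `k`-sector, consecutive-but-one curves `C (i-1)` and `C (i+1)` are disjoint. -/
theorem ksector_alternate_disjoint {M : Type*} [MetricSpace M] (k : ℕ) (hk : 2 ≤ k)
    (P Q : Set M) (hPne : P.Nonempty) (hQne : Q.Nonempty)
    (hPcl : IsClosed P) (hQcl : IsClosed Q) (hPQ : Disjoint P Q)
    (C : ℕ → Set M) (hC0 : C 0 = P) (hCk : C k = Q)
    (hsector : ∀ i, 0 < i → i < k →
      (C i).Nonempty ∧ C i = bisect (C (i - 1)) (C (i + 1))) :
    ∀ i, 0 < i → i < k → Disjoint (C (i - 1)) (C (i + 1)) := by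
  intro i hi0 hik
  rw [Set.disjoint_left]
  rintro z hzm hzp
  have hclosed : ∀ j, j ≤ k → IsClosed (C j) := by
    intro j hj
    rcases Nat.eq_zero_or_pos j with h0 | hpos
    · rw [h0, hC0]; exact hPcl
    rcases eq_or_lt_of_le hj with h | h
    · rw [h, hCk]; exact hQcl
    · rw [(hsector j hpos h).2]
      exact isClosed_eq (continuous_infDist_pt _) (continuous_infDist_pt _)
  have hne : ∀ j, j ≤ k → (C j).Nonempty := by
    intro j hj
    rcases Nat.eq_zero_or_pos j with h0 | hpos
    · rw [h0, hC0]; exact hPne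
    rcases eq_or_lt_of_le hj with h | h
    · rw [h, hCk]; exact hQne
    · exact (hsector j hpos h).1
  have hmem : ∀ j, j ≤ k → infDist z (C j) = 0 → z ∈ C j := fun j hj h0 =>
    ((hclosed j hj).mem_iff_infDist_zero (hne j hj)).2 h0
  have hzi : z ∈ C i := by
    rw [(hsector i hi0 hik).2]
    show infDist z (C (i - 1)) = infDist z (C (i + 1))
    rw [infDist_zero_of_mem hzm, infDist_zero_of_mem hzp]
  have up : ∀ d, i + d ≤ k → z ∈ C (i + d) := by
    intro d
    induction d using Nat.strong_induction_on with
    | _ d ih =>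
      match d with
      | 0 => intro _; exact hzi
      | 1 => intro _; exact hzp
      | (d + 2) =>
        intro hd
        have h1 : z ∈ C (i + (d + 1)) := ih (d + 1) (by omega) (by omega)
        have h0 : z ∈ C (i + d) := ih d (by omega) (by omega)
        rw [(hsector (i + (d + 1)) (by omega) (by omega)).2] at h1
        have h1' : infDist z (C (i + (d + 1) - 1)) = infDist z (C (i + (d + 1) + 1)) := h1
        have e1 : i + (d + 1) - 1 = i + d := by omega
        have e2 : i + (d + 1) + 1 = i + (d + 2) := by omega
        rw [e1, e2, infDist_zero_of_mem h0] at h1'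
        exact hmem _ hd h1'.symm
  have down : ∀ d, d ≤ i → z ∈ C (i - d) := by
    intro d
    induction d using Nat.strong_induction_on with
    | _ d ih =>
      match d with
      | 0 => intro _; exact hzi
      | 1 => intro _; exact hzm
      | (d + 2) =>
        intro hd
        have h1 : z ∈ C (i - (d + 1)) := ih (d + 1) (by omega) (by omega)
        have h0 : z ∈ C (i - d) := ih d (by omega) (by omega)
        rw [(hsector (i - (d + 1)) (by omega) (by omega)).2] at h1
        have h1' : infDist z (C (i - (d + 1) - 1)) = infDist z (C (i - (d + 1) + 1)) := h1
        have e1 : i - (d + 1) - 1 = i - (d + 2) := by omega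
        have e2 : i - (d + 1) + 1 = i - d := by omega
        rw [e1, e2, infDist_zero_of_mem h0] at h1'
        exact hmem _ (by omega) h1'
  have hzP : z ∈ P := by have := down i le_rfl; rwa [Nat.sub_self, hC0] at this
  have hzQ : z ∈ Q := by
    have := up (k - i) (by omega)
    rwa [show i + (k - i) = k by omega, hCk] at this
  exact (Set.disjoint_left.mp hPQ hzP) hzQ
end

section
/- Let P and Q be nonempty, disjoint, closed sets in an arbitrary metric space M, let k ≥ 2 be an integer, and let (R_i, S_i)_{i=1}^{k−1} be a k-gradation between R_0 = P and S_k = Q. Then R_i and S_j are disjoint for each pair of indices i, j with 0 ≤ i < j ≤ k. -/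
open Metric Set

/-- In a `k`-gradation, `R i` and `S j` are disjoint whenever `0 ≤ i < j ≤ k`. -/
theorem kgradation_sets_disjoint {M : Type*} [MetricSpace M] (k : ℕ) (hk : 2 ≤ k)
    (P Q : Set M) (hPne : P.Nonempty) (hQne : Q.Nonempty)
    (hPcl : IsClosed P) (hQcl : IsClosed Q) (hPQ : Disjoint P Q)
    (R S : ℕ → Set M) (hR0 : R 0 = P) (hSk : S k = Q)
    (hgrad : ∀ i, 0 < i → i < k →
      R i = domReg (R (i - 1)) (S (i + 1)) ∧
      S i = domReg (S (i + 1)) (R (i - 1))) :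
    ∀ i j, i < j → j ≤ k → Disjoint (R i) (S j) := by
  -- one-step monotonicity
  have hRstep : ∀ m, 0 < m → m < k → R (m - 1) ⊆ R m := by
    intro m hm0 hmk z hz
    rw [(hgrad m hm0 hmk).1]
    show infDist z (R (m - 1)) ≤ infDist z (S (m + 1))
    rw [infDist_zero_of_mem hz]; exact infDist_nonneg
  have hSstep : ∀ m, 0 < m → m < k → S (m + 1) ⊆ S m := by
    intro m hm0 hmk z hz
    rw [(hgrad m hm0 hmk).2]
    show infDist z (S (m + 1)) ≤ infDist z (R (m - 1))
    rw [infDist_zero_of_mem hz]; exact infDist_nonneg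
  -- chains
  have hRchain : ∀ a b, a ≤ b → b < k → R a ⊆ R b := by
    intro a b hab
    induction b, hab using Nat.le_induction with
    | base => intro _; exact subset_rfl
    | succ n hn ih =>
      intro hnk
      refine (ih (by omega)).trans ?_
      have := hRstep (n + 1) (by omega) hnk
      simpa using this
  have hSchain : ∀ a b, 0 < a → a ≤ b → b ≤ k → S b ⊆ S a := by
    intro a b ha hab
    induction b, hab using Nat.le_induction with
    | base => intro _; exact subset_rfl
    | succ n hn ih =>
      intro hnk
      refine (hSstep n (by omega) (by omega)).trans (ih (by omega))
  have hRne : ∀ m, m < k → (R m).Nonempty := by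
    intro m hm
    exact (hR0 ▸ hPne : (R 0).Nonempty).mono (hRchain 0 m (Nat.zero_le m) hm)
  have hSne : ∀ m, 0 < m → m ≤ k → (S m).Nonempty := by
    intro m hm0 hmk
    exact (hSk ▸ hQne : (S k).Nonempty).mono (hSchain m k hm0 hmk le_rfl)
  intro i j hij hjk
  rw [Set.disjoint_left]
  intro z hzR hzS
  exfalso
  have hik : i < k := lt_of_lt_of_le hij hjk
  -- the key invariant at level i
  have hAi : infDist z (R i) = 0 ∧ infDist z (S (i + 1)) = 0 := by
    refine ⟨infDist_zero_of_mem hzR, le_antisymm ?_ infDist_nonneg⟩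
    calc infDist z (S (i + 1))
        ≤ infDist z (S j) :=
          infDist_le_infDist_of_subset (hSchain (i + 1) j (by omega) hij hjk) ⟨z, hzS⟩
      _ = 0 := infDist_zero_of_mem hzS
  -- pushing the invariant down
  have hdown : ∀ m, 0 < m → m < k →
      (infDist z (R m) = 0 ∧ infDist z (S (m + 1)) = 0) →
      (infDist z (R (m - 1)) = 0 ∧ infDist z (S m) = 0) := by
    intro m hm0 hmk ⟨hRm, hSm⟩
    constructor
    · refine le_antisymm (le_of_forall_pos_le_add ?_) infDist_nonneg
      intro ε hε
      obtain ⟨w, hw, hwd⟩ : ∃ w ∈ R m, dist z w < ε / 2 := by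
        refine (infDist_lt_iff (hRne m hmk)).1 ?_
        rw [hRm]; positivity
      have hw' : infDist w (R (m - 1)) ≤ infDist w (S (m + 1)) := by
        rw [(hgrad m hm0 hmk).1] at hw; exact hw
      have h1 : infDist w (S (m + 1)) ≤ infDist z (S (m + 1)) + dist w z :=
        infDist_le_infDist_add_dist
      have h2 : infDist z (R (m - 1)) ≤ infDist w (R (m - 1)) + dist z w :=
        infDist_le_infDist_add_dist
      rw [hSm] at h1
      rw [dist_comm w z] at h1
      linarith
    · refine le_antisymm ?_ infDist_nonneg
      calc infDist z (S m)
          ≤ infDist z (S (m + 1)) :=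
            infDist_le_infDist_of_subset (hSstep m hm0 hmk) (hSne (m + 1) (by omega) (by omega))
        _ = 0 := hSm
  -- pushing the invariant up
  have hup : ∀ m, m + 1 < k →
      (infDist z (R m) = 0 ∧ infDist z (S (m + 1)) = 0) →
      (infDist z (R (m + 1)) = 0 ∧ infDist z (S (m + 2)) = 0) := by
    intro m hmk ⟨hRm, hSm⟩
    constructor
    · refine le_antisymm ?_ infDist_nonneg
      have hsub : R m ⊆ R (m + 1) := by
        have := hRstep (m + 1) (by omega) hmk
        simpa using this
      calc infDist z (R (m + 1))
          ≤ infDist z (R m) := infDist_le_infDist_of_subset hsub (hRne m (by omega))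
        _ = 0 := hRm
    · refine le_antisymm (le_of_forall_pos_le_add ?_) infDist_nonneg
      intro ε hε
      obtain ⟨w, hw, hwd⟩ : ∃ w ∈ S (m + 1), dist z w < ε / 2 := by
        refine (infDist_lt_iff (hSne (m + 1) (by omega) (by omega))).1 ?_
        rw [hSm]; positivity
      have hw' : infDist w (S (m + 2)) ≤ infDist w (R m) := by
        have := (hgrad (m + 1) (by omega) hmk).2
        rw [this] at hw
        exact hw
      have h1 : infDist w (R m) ≤ infDist z (R m) + dist w z :=
        infDist_le_infDist_add_dist
      have h2 : infDist z (S (m + 2)) ≤ infDist w (S (m + 2)) + dist z w :=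
        infDist_le_infDist_add_dist
      rw [hRm] at h1
      rw [dist_comm w z] at h1
      linarith
  -- iterate down to 0
  have hA0 : ∀ d, d ≤ i →
      infDist z (R (i - d)) = 0 ∧ infDist z (S (i - d + 1)) = 0 := by
    intro d
    induction d with
    | zero => intro _; simpa using hAi
    | succ n ih =>
      intro hni
      have h := hdown (i - n) (by omega) (by omega) (ih (by omega))
      have e1 : i - (n + 1) = i - n - 1 := by omega
      have e2 : i - n - 1 + 1 = i - n := by omega
      rw [e1, e2]
      exact h
  -- iterate up to k - 1
  have hAup : ∀ m, i ≤ m → m < k →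
      infDist z (R m) = 0 ∧ infDist z (S (m + 1)) = 0 := by
    intro m hm
    induction m, hm using Nat.le_induction with
    | base => intro _; exact hAi
    | succ n hn ih =>
      intro hnk
      exact hup n hnk (ih (by omega))
  have hzP : z ∈ P := by
    have h := (hA0 i le_rfl).1
    rw [Nat.sub_self, hR0] at h
    exact (hPcl.mem_iff_infDist_zero hPne).2 h
  have hzQ : z ∈ Q := by
    have h := (hAup (k - 1) (by omega) (by omega)).2
    have e : k - 1 + 1 = k := by omega
    rw [e, hSk] at h
    exact (hQcl.mem_iff_infDist_zero hQne).2 h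
  exact Set.disjoint_left.mp hPQ hzP hzQ
end

section
/- Let X and Y be disjoint nonempty closed sets in ℝ^d with the Euclidean metric (or, more generally, in a finite-dimensional real normed space whose norm is strictly convex). Then dom(Y, X) equals the closure of the complement of dom(X, Y), i.e., dom(Y, X) = closure(ℝ^d \ dom(X, Y)). -/
open Metric Set

/-- In a finite-dimensional real normed space with a strictly convex norm (in particular,
in Euclidean space `ℝ^d`), for disjoint nonempty closed sets `X`, `Y`, the dominance
region of `Y` over `X` is the closure of the complement of that of `X` over `Y`. -/
theorem dom_eq_closure_compl_dom {E : Type*} [NormedAddCommGroup E] [NormedSpace ℝ E]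
    [FiniteDimensional ℝ E] [StrictConvexSpace ℝ E]
    (X Y : Set E) (hX : X.Nonempty) (hY : Y.Nonempty)
    (hXcl : IsClosed X) (hYcl : IsClosed Y) (hXY : Disjoint X Y) :
    domReg Y X = closure ((domReg X Y)ᶜ) := by
  apply Subset.antisymm
  · intro z hz
    have hz' : infDist z Y ≤ infDist z X := hz
    rcases lt_or_eq_of_le hz' with h | h
    · exact subset_closure (by simpa [domReg] using h)
    · -- equality case: infDist z Y = infDist z X =: d
      set d := infDist z X with hd
      have hd0 : 0 < d := by
        rcases (lt_or_eq_of_le (infDist_nonneg : (0:ℝ) ≤ d)) with h' | h'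
        · exact h'
        · exfalso
          have hzX : z ∈ X := (hXcl.mem_iff_infDist_zero hX).2 h'.symm
          have hzY : z ∈ Y := (hYcl.mem_iff_infDist_zero hY).2 (by rw [h, hd, ← h'])
          exact Set.disjoint_left.mp hXY hzX hzY
      obtain ⟨y, hyY, hzy⟩ := hYcl.exists_infDist_eq_dist hY z
      have hzyd : dist z y = d := by rw [← hzy, h]
      -- key: for t ∈ (0,1), z + t•(y-z) is strictly closer to Y
      have key : ∀ t : ℝ, 0 < t → t < 1 →
          (z + t • (y - z)) ∈ (domReg X Y)ᶜ := by
        intro t ht0 ht1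
        set w := z + t • (y - z) with hw
        have hwy : dist w y = (1 - t) * d := by
          have : w - y = (1 - t) • (z - y) := by
            simp only [hw, sub_smul, one_smul, smul_sub]
            abel
          rw [dist_eq_norm, this, norm_smul, Real.norm_eq_abs,
            abs_of_pos (by linarith), ← dist_eq_norm, hzyd]
        have hzw : dist z w = t * d := by
          have : z - w = (-t) • (y - z) := by
            simp only [hw, neg_smul]; abel
          rw [dist_eq_norm, this, norm_smul, Real.norm_eq_abs, abs_neg,
            abs_of_pos ht0, ← dist_eq_norm', hzyd]
        have hY' : infDist w Y ≤ (1 - t) * d := hwy ▸ infDist_le_dist_of_mem hyY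
        have hX' : (1 - t) * d < infDist w X := by
          obtain ⟨x, hxX, hwx⟩ := hXcl.exists_infDist_eq_dist hX w
          rw [hwx]
          by_contra hle
          push_neg at hle
          have hzx_ge : d ≤ dist z x := infDist_le_dist_of_mem hxX
          have htri : dist z x ≤ dist z w + dist w x := dist_triangle z w x
          have hzx : dist z x = d := by
            have : dist z w + dist w x ≤ d := by rw [hzw]; nlinarith
            linarith
          have heq : dist z w + dist w x = dist z x := by
            have : d ≤ dist z w + dist w x := hzx ▸ htri
            have h2 : dist z w + dist w x ≤ d := by rw [hzw]; nlinarith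
            linarith [hzx]
          have hwbtw : Wbtw ℝ z w x := dist_add_dist_eq_iff.mp heq
          obtain ⟨a, b, ha, hb, hab, habw⟩ := hwbtw.mem_segment
          have hwz : w - z = b • (x - z) := by
            rw [← habw, smul_sub]
            have : a = 1 - b := by linarith
            rw [this, sub_smul, one_smul]
            abel
          have hbd : b * d = t * d := by
            have h1 : ‖w - z‖ = t * d := by
              rw [← dist_eq_norm', hzw]
            have h2 : ‖x - z‖ = d := by rw [← dist_eq_norm', hzx]
            rw [hwz, norm_smul, Real.norm_eq_abs, abs_of_nonneg hb, h2] at h1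
            exact h1
          have hbt : b = t := mul_right_cancel₀ hd0.ne' hbd
          have hxy : x = y := by
            have h1 : w - z = t • (y - z) := by simp [hw]
            rw [hbt, h1] at hwz
            have := smul_right_injective E ht0.ne' hwz.symm
            have hyz : y - z = x - z := this.symm
            have : y = x := by
              have := congrArg (· + z) hyz
              simpa using this
            exact this.symm
          exact Set.disjoint_left.mp hXY hxX (hxy ▸ hyY)
        simp only [domReg, mem_compl_iff, mem_setOf_eq, not_le]
        exact lt_of_le_of_lt hY' hX'
      rw [Metric.mem_closure_iff]
      intro ε hε
      set t : ℝ := min (ε / (2 * d)) (1 / 2) with htdef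
      have ht0 : 0 < t := lt_min (by positivity) (by norm_num)
      have ht1 : t < 1 := lt_of_le_of_lt (min_le_right _ _) (by norm_num)
      refine ⟨z + t • (y - z), key t ht0 ht1, ?_⟩
      have : dist z (z + t • (y - z)) = t * d := by
        have h1 : z - (z + t • (y - z)) = (-t) • (y - z) := by
          simp only [neg_smul]; abel
        rw [dist_eq_norm, h1, norm_smul, Real.norm_eq_abs, abs_neg,
          abs_of_pos ht0, ← dist_eq_norm', hzyd]
      rw [this]
      calc t * d ≤ (ε / (2 * d)) * d := by
            apply mul_le_mul_of_nonneg_right (min_le_left _ _) hd0.le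
        _ = ε / 2 := by field_simp
        _ < ε := by linarith
  · apply closure_minimal
    · intro z hz
      simp only [domReg, mem_compl_iff, mem_setOf_eq, not_le] at hz ⊢
      exact hz.le
    · exact isClosed_le (continuous_infDist_pt Y) (continuous_infDist_pt X)
end

section
/- Let M be the three-point metric subspace {−1, 0, 1} of the real line with the induced metric, P = {1} and Q = {−1}. Then there is no 3-sector of P and Q, i.e., there is no pair (C_1, C_2) of nonempty subsets of M with C_1 = bisect(P, C_2) and C_2 = bisect(C_1, Q). -/
open Metric Set

/-- In the three-point subspace `{-1, 0, 1}` of the real line, the sets `P = {1}` and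
`Q = {-1}` admit no 3-sector. -/
theorem no_trisector_three_points :
    ¬ ∃ C₁ C₂ : Set ({-1, 0, 1} : Set ℝ), C₁.Nonempty ∧ C₂.Nonempty ∧
      C₁ = bisect {x : ({-1, 0, 1} : Set ℝ) | (x : ℝ) = 1} C₂ ∧
      C₂ = bisect C₁ {x : ({-1, 0, 1} : Set ℝ) | (x : ℝ) = -1} := by
  rintro ⟨C₁, C₂, hC₁ne, hC₂ne, h₁, h₂⟩
  have hfin : Finite ({-1, 0, 1} : Set ℝ) := by
    apply Set.Finite.to_subtype
    exact (Set.finite_singleton (1 : ℝ)).insert 0 |>.insert (-1)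
  set a : ({-1, 0, 1} : Set ℝ) := ⟨-1, by norm_num⟩ with ha
  set b : ({-1, 0, 1} : Set ℝ) := ⟨0, by norm_num⟩ with hb
  set c : ({-1, 0, 1} : Set ℝ) := ⟨1, by norm_num⟩ with hc
  have hP : {x : ({-1, 0, 1} : Set ℝ) | (x : ℝ) = 1} = {c} := by
    ext x; simp [hc, Subtype.ext_iff]
  have hQ : {x : ({-1, 0, 1} : Set ℝ) | (x : ℝ) = -1} = {a} := by
    ext x; simp [ha, Subtype.ext_iff]
  have hmem₁ : ∀ z, z ∈ C₁ ↔ dist z c = infDist z C₂ := by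
    intro z
    rw [h₁, hP]
    simp only [bisect, mem_setOf_eq, infDist_singleton]
  have hmem₂ : ∀ z, z ∈ C₂ ↔ infDist z C₁ = dist z a := by
    intro z
    rw [h₂, hQ]
    simp only [bisect, mem_setOf_eq, infDist_singleton]
  have hcases : ∀ x : ({-1, 0, 1} : Set ℝ), x = a ∨ x = b ∨ x = c := by
    rintro ⟨x, hx⟩
    simp only [Set.mem_insert_iff, Set.mem_singleton_iff] at hx
    rcases hx with h | h | h
    · exact Or.inl (Subtype.ext h)
    · exact Or.inr (Or.inl (Subtype.ext h))
    · exact Or.inr (Or.inr (Subtype.ext h))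
  have dac : dist a c = 2 := by
    rw [Subtype.dist_eq, Real.dist_eq]; norm_num
  have dca : dist c a = 2 := by rw [dist_comm]; exact dac
  have dba : dist b a = 1 := by
    rw [Subtype.dist_eq, Real.dist_eq]; norm_num
  have dab : dist a b = 1 := by rw [dist_comm]; exact dba
  have hC₁closed : IsClosed C₁ := (Set.toFinite C₁).isClosed
  have hC₂closed : IsClosed C₂ := (Set.toFinite C₂).isClosed
  -- Step 1: a ∉ C₂
  have haC₂ : a ∉ C₂ := by
    intro haC₂
    have h0 : infDist a C₁ = 0 := by
      rw [(hmem₂ a).mp haC₂, dist_self]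
    have haC₁ : a ∈ C₁ := (hC₁closed.mem_iff_infDist_zero hC₁ne).mpr h0
    have : dist a c = infDist a C₂ := (hmem₁ a).mp haC₁
    have hle : infDist a C₂ ≤ dist a a := infDist_le_dist_of_mem haC₂
    rw [dist_self] at hle
    rw [dac] at this
    linarith
  -- Step 2: b ∉ C₂
  have hbC₂ : b ∉ C₂ := by
    intro hbC₂
    have h1 : infDist b C₁ = 1 := by rw [(hmem₂ b).mp hbC₂, dba]
    obtain ⟨x, hx⟩ := hC₁ne
    rcases hcases x with rfl | rfl | rfl
    · -- a ∈ C₁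
      have : dist a c = infDist a C₂ := (hmem₁ a).mp hx
      have hle : infDist a C₂ ≤ dist a b := infDist_le_dist_of_mem hbC₂
      rw [dab] at hle; rw [dac] at this; linarith
    · -- b ∈ C₁
      have hle : infDist b C₁ ≤ dist b b := infDist_le_dist_of_mem hx
      rw [dist_self] at hle; linarith
    · -- c ∈ C₁
      have h2 : dist c c = infDist c C₂ := (hmem₁ c).mp hx
      rw [dist_self] at h2
      have hcC₂ : c ∈ C₂ := (hC₂closed.mem_iff_infDist_zero hC₂ne).mpr h2.symm
      have h3 : infDist c C₁ = dist c a := (hmem₂ c).mp hcC₂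
      have hle : infDist c C₁ ≤ dist c c := infDist_le_dist_of_mem hx
      rw [dist_self] at hle; rw [dca] at h3; linarith
  -- Step 3: C₂ = {c}, contradiction
  obtain ⟨y, hy⟩ := hC₂ne
  rcases hcases y with rfl | rfl | rfl
  · exact haC₂ hy
  · exact hbC₂ hy
  · have h0 : infDist c C₂ = 0 :=
      le_antisymm (by have := infDist_le_dist_of_mem (x := c) hy; rwa [dist_self] at this) infDist_nonneg
    have hcC₁ : c ∈ C₁ := (hmem₁ c).mpr (by rw [dist_self, h0])
    have h3 : infDist c C₁ = dist c a := (hmem₂ c).mp hy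
    have hle : infDist c C₁ ≤ dist c c := infDist_le_dist_of_mem hcC₁
    rw [dist_self] at hle; rw [dca] at h3; linarith
end
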